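/- arXiv:1904.03533 — 4 statements merged into one kernel-verified Lean document; each statement's English description precedes it below -/
import Mathlib

section
/- Let X be a finite connected k-regular graph (k ≥ 3) on at least two vertices, let A be its adjacency matrix, let λ₁(X) = max{λ : λ is an eigenvalue of A and λ ≠ k}, and let h(X) be its Cheeger constant. Then h(X)²/(2k) ≤ k − λ₁(X) ≤ 2·h(X). -/
open Matrix Finset

section CheegerAux

set_option linter.unusedSectionVars false
set_option maxHeartbeats 1600000

variable {V : Type*} [Fintype V] [DecidableEq V]
variable (G : SimpleGraph V) [DecidableRel G.Adj]

private lemma adj_symm_entry (u v : V) : G.adjMatrix ℝ u v = G.adjMatrix ℝ v u := by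
  simp [SimpleGraph.adjMatrix_apply, G.adj_comm]

private lemma adj_dot_symm (x y : V → ℝ) :
    x ⬝ᵥ (G.adjMatrix ℝ *ᵥ y) = y ⬝ᵥ (G.adjMatrix ℝ *ᵥ x) := by
  simp only [dotProduct, mulVec, Finset.mul_sum]
  rw [Finset.sum_comm]
  refine Finset.sum_congr rfl fun u _ => Finset.sum_congr rfl fun v _ => ?_
  rw [adj_symm_entry G v u]
  ring

private lemma adj_row_sum {k : ℕ} (hreg : G.IsRegularOfDegree k) (u : V) :
    ∑ v, G.adjMatrix ℝ u v = k := by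
  have h1 : ∑ v, G.adjMatrix ℝ u v = ∑ v ∈ G.neighborFinset u, (1 : ℝ) := by
    simpa [mulVec, dotProduct] using G.adjMatrix_mulVec_apply u (fun _ => (1:ℝ))
  rw [h1, Finset.sum_const, SimpleGraph.neighborFinset, Set.toFinset_card]
  have := hreg u
  rw [SimpleGraph.degree] at this
  simp [SimpleGraph.neighborFinset, Set.toFinset_card] at this
  simp [this]

private lemma adj_col_sum {k : ℕ} (hreg : G.IsRegularOfDegree k) (v : V) :
    ∑ u, G.adjMatrix ℝ u v = k := by
  calc ∑ u, G.adjMatrix ℝ u v = ∑ u, G.adjMatrix ℝ v u :=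
        Finset.sum_congr rfl fun u _ => adj_symm_entry G u v
    _ = k := adj_row_sum G hreg v

private lemma adj_nonneg (u v : V) : (0 : ℝ) ≤ G.adjMatrix ℝ u v := by
  simp only [SimpleGraph.adjMatrix_apply]
  split <;> norm_num

private lemma eigen_k_const {k : ℕ} (hconn : G.Connected) (hreg : G.IsRegularOfDegree k)
    {f : V → ℝ} (hf : G.adjMatrix ℝ *ᵥ f = (k : ℝ) • f) (v w : V) : f v = f w := by
  classical
  have : Nonempty V := hconn.nonempty
  obtain ⟨v0, -, hv0⟩ := Finset.exists_max_image Finset.univ f Finset.univ_nonempty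
  have step : ∀ x : V, f x = f v0 → ∀ u, G.Adj x u → f u = f v0 := by
    intro x hx u hadj
    by_contra hu
    have hlt : f u < f v0 := lt_of_le_of_ne (hv0 u (mem_univ u)) hu
    have hsum : ∑ z ∈ G.neighborFinset x, f z = (k : ℝ) * f x := by
      have := congrFun hf x
      simpa [SimpleGraph.adjMatrix_mulVec_apply] using this
    have hcard : (G.neighborFinset x).card = k := hreg x
    have hlt2 : ∑ z ∈ G.neighborFinset x, f z < ∑ z ∈ G.neighborFinset x, f v0 := by
      refine Finset.sum_lt_sum (fun z _ => hv0 z (mem_univ z)) ⟨u, ?_, hlt⟩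
      simpa [SimpleGraph.mem_neighborFinset] using hadj
    rw [hsum, Finset.sum_const, hcard, nsmul_eq_mul, hx] at hlt2
    exact lt_irrefl _ hlt2
  have walkstep : ∀ (x y : V) (p : G.Walk x y), f x = f v0 → f y = f v0 := by
    intro x y p
    induction p with
    | nil => exact id
    | cons hadj q ih => exact fun hx => ih (step _ hx _ hadj)
  have main : ∀ x : V, f x = f v0 := by
    intro x
    obtain ⟨p⟩ := hconn.preconnected v0 x
    exact walkstep v0 x p rfl
  rw [main v, main w]

private lemma adj_herm : (G.adjMatrix ℝ).IsHermitian := by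
  unfold Matrix.IsHermitian
  ext u v
  simp [Matrix.conjTranspose_apply, SimpleGraph.adjMatrix_apply, G.adj_comm]

private lemma inner_eq_dot (x y : EuclideanSpace ℝ V) :
    (inner ℝ x y : ℝ) = (fun v => x v) ⬝ᵥ (fun v => y v) := by
  simp [PiLp.inner_apply, dotProduct, RCLike.inner_apply, mul_comm]

def Espec (G : SimpleGraph V) [DecidableRel G.Adj] (k : ℕ) : Set ℝ :=
  {μ : ℝ | μ ≠ (k : ℝ) ∧ ∃ x : V → ℝ, x ≠ 0 ∧ G.adjMatrix ℝ *ᵥ x = μ • x}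

def crossCard (Y : Finset V) : ℕ :=
  (Finset.univ.filter (fun p : V × V => p.1 ∈ Y ∧ p.2 ∉ Y ∧ G.Adj p.1 p.2)).card

private lemma cross_swap (Y : Finset V) :
    (Finset.univ.filter (fun p : V × V => p.1 ∉ Y ∧ p.2 ∈ Y ∧ G.Adj p.1 p.2)).card
      = crossCard G Y := by
  unfold crossCard
  refine Finset.card_bij' (fun p _ => Prod.swap p) (fun p _ => Prod.swap p) ?_ ?_ ?_ ?_
  · rintro ⟨u, v⟩ hp
    simp only [Finset.mem_filter, Finset.mem_univ, true_and] at hp ⊢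
    exact ⟨hp.2.1, hp.1, hp.2.2.symm⟩
  · rintro ⟨u, v⟩ hp
    simp only [Finset.mem_filter, Finset.mem_univ, true_and] at hp ⊢
    exact ⟨hp.2.1, hp.1, hp.2.2.symm⟩
  · rintro ⟨u, v⟩ _; rfl
  · rintro ⟨u, v⟩ _; rfl

private lemma dot_self_eq (x : V → ℝ) : x ⬝ᵥ x = ∑ u, x u ^ 2 := by
  simp [dotProduct, sq]

private lemma abel_sum (a : ℕ → ℝ) : ∀ N : ℕ,
    ∑ l ∈ Finset.range N, ((l : ℝ) + 1) * (a l - a (l + 1))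
      = (∑ l ∈ Finset.range N, a l) - N * a N := by
  intro N
  induction N with
  | zero => simp
  | succ N ih =>
    rw [Finset.sum_range_succ, ih, Finset.sum_range_succ]
    push_cast
    ring

private lemma tele_sum (a : ℕ → ℝ) {i j : ℕ} (hij : i ≤ j) :
    ∑ l ∈ Finset.Ico i j, (a l - a (l + 1)) = a i - a j := by
  rw [Finset.sum_Ico_eq_sub _ hij, Finset.sum_range_sub' a, Finset.sum_range_sub' a]
  ring


private lemma spectral (k : ℕ) (hconn : G.Connected) (hreg : G.IsRegularOfDegree k)
    (hcard : 2 ≤ Fintype.card V) :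
    sSup (Espec G k) ∈ Espec G k ∧
      ∀ x : V → ℝ, (∑ v, x v) = 0 →
        x ⬝ᵥ (G.adjMatrix ℝ *ᵥ x) ≤ sSup (Espec G k) * (x ⬝ᵥ x) := by
  classical
  have hnv : Nonempty V := hconn.nonempty
  set A := G.adjMatrix ℝ with hAdef
  have hA : A.IsHermitian := adj_herm G
  set b := hA.eigenvectorBasis with hbdef
  set lam := hA.eigenvalues with hlamdef
  set bf : V → V → ℝ := fun i v => b i v with hbfdef
  have heig : ∀ i, A *ᵥ bf i = lam i • bf i := fun i => hA.mulVec_eigenvectorBasis i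
  have hbne : ∀ i, bf i ≠ 0 := by
    intro i hzero
    have h1 : ‖b i‖ = 1 := b.orthonormal.1 i
    have : (b i : EuclideanSpace ℝ V) = 0 := by
      ext v; exact congrFun hzero v
    rw [this, norm_zero] at h1
    norm_num at h1
  have hrepr : ∀ (x : V → ℝ) (i : V),
      b.repr ((WithLp.equiv 2 (V → ℝ)).symm x) i = bf i ⬝ᵥ x := by
    intro x i
    rw [OrthonormalBasis.repr_apply_apply, inner_eq_dot]
    rfl
  -- membership of any eigenvalue among lam
  have hmem : ∀ μ ∈ Espec G k, ∃ i, lam i = μ := by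
    rintro μ ⟨-, x, hx0, hx⟩
    have key : ∀ i, lam i * (bf i ⬝ᵥ x) = μ * (bf i ⬝ᵥ x) := by
      intro i
      have h1 : bf i ⬝ᵥ (A *ᵥ x) = μ * (bf i ⬝ᵥ x) := by
        rw [hx, dotProduct_smul]; rfl
      have h2 : bf i ⬝ᵥ (A *ᵥ x) = lam i * (bf i ⬝ᵥ x) := by
        rw [adj_dot_symm G (bf i) x, heig i, dotProduct_smul, smul_eq_mul,
          dotProduct_comm x (bf i)]
      rw [← h2, h1]
    have hex : ∃ i, bf i ⬝ᵥ x ≠ 0 := by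
      by_contra hall
      push_neg at hall
      have : b.repr ((WithLp.equiv 2 (V → ℝ)).symm x) = 0 := by
        ext i; rw [hrepr]; exact hall i
      have hx' : ((WithLp.equiv 2 (V → ℝ)).symm x) = 0 := b.repr.map_eq_zero_iff.mp this
      exact hx0 (by ext v; exact congrFun (congrArg (WithLp.equiv 2 (V → ℝ)) hx') v)
    obtain ⟨i, hi⟩ := hex
    exact ⟨i, mul_right_cancel₀ hi (key i)⟩
  have hEfin : (Espec G k).Finite :=
    (Set.finite_range lam).subset (fun μ hμ => by
      obtain ⟨i, hi⟩ := hmem μ hμ; exact ⟨i, hi⟩)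
  -- constant eigenvectors for eigenvalue k
  have hkconst : ∀ i, lam i = (k : ℝ) → ∀ v w, bf i v = bf i w := by
    intro i hi v w
    have := heig i
    rw [hi] at this
    exact eigen_k_const G hconn hreg this v w
  have hne : ∃ i, lam i ≠ (k : ℝ) := by
    by_contra hall
    push_neg at hall
    obtain ⟨i, j, hij⟩ := Fintype.exists_pair_of_one_lt_card (by omega : 1 < Fintype.card V)
    have horth : (inner ℝ (b i) (b j) : ℝ) = 0 := b.orthonormal.2 hij
    rw [inner_eq_dot] at horth
    have hci := hkconst i (hall i)
    have hcj := hkconst j (hall j)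
    obtain ⟨v0⟩ := hnv
    have hdots : (fun v => (b i) v) ⬝ᵥ (fun v => (b j) v)
        = (Fintype.card V : ℝ) * (bf i v0 * bf j v0) := by
      simp only [dotProduct]
      rw [Finset.sum_congr rfl (fun v _ => by rw [show (b i) v = bf i v0 from hci v v0,
        show (b j) v = bf j v0 from hcj v v0])]
      rw [Finset.sum_const, Finset.card_univ, nsmul_eq_mul]
    rw [hdots] at horth
    have hcV : (Fintype.card V : ℝ) ≠ 0 := by positivity
    have := mul_eq_zero.mp horth
    rcases this with h | h
    · exact hcV h
    · rcases mul_eq_zero.mp h with h' | h'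
      · exact hbne i (by ext v; rw [hci v v0, h']; rfl)
      · exact hbne j (by ext v; rw [hcj v v0, h']; rfl)
  have hEne : (Espec G k).Nonempty := by
    obtain ⟨i, hi⟩ := hne
    exact ⟨lam i, hi, bf i, hbne i, heig i⟩
  have hsup_mem : sSup (Espec G k) ∈ Espec G k := hEne.csSup_mem hEfin
  refine ⟨hsup_mem, ?_⟩
  intro x hx
  set c : V → ℝ := fun i => bf i ⬝ᵥ x with hcdef
  have hAc : ∀ i, bf i ⬝ᵥ (A *ᵥ x) = lam i * c i := by
    intro i
    rw [adj_dot_symm G (bf i) x, heig i, dotProduct_smul, smul_eq_mul, dotProduct_comm]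
  have hparseval : ∀ y : V → ℝ, x ⬝ᵥ y =
      ∑ i, (bf i ⬝ᵥ x) * (bf i ⬝ᵥ y) := by
    intro y
    have h1 : (inner ℝ ((WithLp.equiv 2 (V → ℝ)).symm x) ((WithLp.equiv 2 (V → ℝ)).symm y) : ℝ)
        = inner ℝ (b.repr ((WithLp.equiv 2 (V → ℝ)).symm x))
            (b.repr ((WithLp.equiv 2 (V → ℝ)).symm y)) :=
      (b.repr.inner_map_map _ _).symm
    rw [inner_eq_dot, inner_eq_dot] at h1
    have h2 : (fun v => ((WithLp.equiv 2 (V → ℝ)).symm x) v) ⬝ᵥ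
        (fun v => ((WithLp.equiv 2 (V → ℝ)).symm y) v) = x ⬝ᵥ y := rfl
    rw [h2] at h1
    rw [h1]
    refine Finset.sum_congr rfl fun i _ => ?_
    show b.repr ((WithLp.equiv 2 (V → ℝ)).symm x) i * b.repr ((WithLp.equiv 2 (V → ℝ)).symm y) i
      = (bf i ⬝ᵥ x) * (bf i ⬝ᵥ y)
    rw [hrepr, hrepr]
  have hxx : x ⬝ᵥ x = ∑ i, c i * c i := hparseval x
  have hxAx : x ⬝ᵥ (A *ᵥ x) = ∑ i, c i * (lam i * c i) := by
    rw [hparseval (A *ᵥ x)]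
    exact Finset.sum_congr rfl fun i _ => by rw [hAc i]
  have hczero : ∀ i, lam i = (k : ℝ) → c i = 0 := by
    intro i hi
    obtain ⟨v0⟩ := hnv
    have hconst := hkconst i hi
    have : c i = ∑ v, bf i v0 * x v := by
      simp only [hcdef, dotProduct]
      exact Finset.sum_congr rfl fun v _ => by rw [hconst v v0]
    rw [this, ← Finset.mul_sum, hx, mul_zero]
  have hbound : ∀ i, c i * (lam i * c i) ≤ sSup (Espec G k) * (c i * c i) := by
    intro i
    by_cases hi : lam i = (k : ℝ)
    · rw [hczero i hi]; ring_nf; rfl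
    · have hmemE : lam i ∈ Espec G k := ⟨hi, bf i, hbne i, heig i⟩
      have hle : lam i ≤ sSup (Espec G k) := le_csSup hEfin.bddAbove hmemE
      nlinarith [sq_nonneg (c i)]
  rw [hxAx, hxx, Finset.mul_sum]
  exact Finset.sum_le_sum fun i _ => hbound i

private lemma quad_identity {k : ℕ} (hreg : G.IsRegularOfDegree k) (x : V → ℝ) :
    ∑ u, ∑ v, G.adjMatrix ℝ u v * (x u - x v) ^ 2
      = 2 * ((k : ℝ) * (x ⬝ᵥ x) - x ⬝ᵥ (G.adjMatrix ℝ *ᵥ x)) := by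
  have step1 : ∀ u : V, ∑ v, G.adjMatrix ℝ u v * (x u - x v) ^ 2
      = (k : ℝ) * x u ^ 2 + (∑ v, G.adjMatrix ℝ u v * x v ^ 2)
        - 2 * (x u * (G.adjMatrix ℝ *ᵥ x) u) := by
    intro u
    have : ∑ v, G.adjMatrix ℝ u v * (x u - x v) ^ 2
        = (∑ v, G.adjMatrix ℝ u v) * x u ^ 2 + (∑ v, G.adjMatrix ℝ u v * x v ^ 2)
          - 2 * (x u * ∑ v, G.adjMatrix ℝ u v * x v) := by
      rw [Finset.sum_mul, Finset.mul_sum, Finset.mul_sum, ← Finset.sum_add_distrib,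
        ← Finset.sum_sub_distrib]
      exact Finset.sum_congr rfl fun v _ => by ring
    rw [this, adj_row_sum G hreg u]
    rfl
  rw [Finset.sum_congr rfl fun u _ => step1 u]
  rw [Finset.sum_sub_distrib, Finset.sum_add_distrib]
  have h1 : ∑ u, (k : ℝ) * x u ^ 2 = (k : ℝ) * (x ⬝ᵥ x) := by
    rw [← Finset.mul_sum, dot_self_eq]
  have h2 : ∑ u, ∑ v, G.adjMatrix ℝ u v * x v ^ 2 = (k : ℝ) * (x ⬝ᵥ x) := by
    rw [Finset.sum_comm]
    have : ∀ v : V, ∑ u, G.adjMatrix ℝ u v * x v ^ 2 = (k : ℝ) * x v ^ 2 := by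
      intro v
      rw [← Finset.sum_mul, adj_col_sum G hreg v]
    rw [Finset.sum_congr rfl fun v _ => this v, ← Finset.mul_sum, dot_self_eq]
  have h3 : ∑ u, 2 * (x u * (G.adjMatrix ℝ *ᵥ x) u) = 2 * (x ⬝ᵥ (G.adjMatrix ℝ *ᵥ x)) := by
    rw [← Finset.mul_sum]
    rfl
  rw [h1, h2, h3]
  ring


private lemma cross_double (Y : Finset V) (s t : ℝ) :
    ∑ u, ∑ v, G.adjMatrix ℝ u v *
        ((if u ∈ Y then s else t) - (if v ∈ Y then s else t)) ^ 2
      = 2 * (crossCard G Y : ℝ) * (s - t) ^ 2 := by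
  classical
  have expand : ∀ u v : V, G.adjMatrix ℝ u v *
      ((if u ∈ Y then s else t) - (if v ∈ Y then s else t)) ^ 2
      = if ((u ∈ Y ∧ v ∉ Y ∧ G.Adj u v) ∨ (u ∉ Y ∧ v ∈ Y ∧ G.Adj u v))
          then (s - t) ^ 2 else 0 := by
    intro u v
    by_cases hu : u ∈ Y <;> by_cases hv : v ∈ Y <;> by_cases ha : G.Adj u v <;>
      simp [SimpleGraph.adjMatrix_apply, hu, hv, ha] <;> ring
  rw [Finset.sum_congr rfl fun u _ => Finset.sum_congr rfl fun v _ => expand u v]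
  rw [← Finset.sum_product']
  rw [Finset.sum_ite, Finset.sum_const, Finset.sum_const_zero, add_zero]
  have hdisj : Disjoint
      ((Finset.univ ×ˢ Finset.univ).filter (fun p : V × V => p.1 ∈ Y ∧ p.2 ∉ Y ∧ G.Adj p.1 p.2))
      ((Finset.univ ×ˢ Finset.univ).filter (fun p : V × V => p.1 ∉ Y ∧ p.2 ∈ Y ∧ G.Adj p.1 p.2)) := by
    rw [Finset.disjoint_left]
    rintro ⟨u, v⟩ h1 h2
    simp only [Finset.mem_filter] at h1 h2
    exact h2.2.1 h1.2.1
  have hsplit : ((Finset.univ ×ˢ Finset.univ).filter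
      (fun p : V × V => (p.1 ∈ Y ∧ p.2 ∉ Y ∧ G.Adj p.1 p.2) ∨ (p.1 ∉ Y ∧ p.2 ∈ Y ∧ G.Adj p.1 p.2))).card
      = 2 * crossCard G Y := by
    rw [Finset.filter_or, Finset.card_union_of_disjoint hdisj]
    rw [Finset.univ_product_univ]
    rw [cross_swap]
    unfold crossCard
    ring
  rw [Finset.univ_product_univ] at hsplit ⊢
  rw [hsplit]
  push_cast [nsmul_eq_mul]
  ring

private lemma dir_easy {k : ℕ} (hreg : G.IsRegularOfDegree k)
    (lam1 : ℝ)
    (hray : ∀ x : V → ℝ, (∑ v, x v) = 0 →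
      x ⬝ᵥ (G.adjMatrix ℝ *ᵥ x) ≤ lam1 * (x ⬝ᵥ x))
    (Y : Finset V) (hY : Y.Nonempty) (hY2 : 2 * Y.card ≤ Fintype.card V) :
    ((k : ℝ) - lam1) * Y.card ≤ 2 * crossCard G Y := by
  classical
  set n := Fintype.card V with hn
  set y := Y.card with hy
  have hy1 : 1 ≤ y := hY.card_pos
  have hyn : 2 * y ≤ n := hY2
  set x : V → ℝ := fun v => if v ∈ Y then ((n : ℝ) - y) else (-(y : ℝ)) with hx
  have hcompl : (Finset.univ.filter (fun v => v ∉ Y)).card = n - y := by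
    rw [Finset.filter_not, Finset.filter_mem_eq_inter, Finset.univ_inter]
    rw [Finset.card_sdiff_of_subset (Finset.subset_univ Y), Finset.card_univ]
  have hsum : ∑ v, x v = 0 := by
    rw [hx, Finset.sum_ite, Finset.sum_const, Finset.sum_const]
    rw [Finset.filter_mem_eq_inter, Finset.univ_inter, hcompl]
    rw [nsmul_eq_mul, nsmul_eq_mul, ← hy]
    have : ((n - y : ℕ) : ℝ) = (n : ℝ) - y := by
      push_cast [Nat.cast_sub (by omega : y ≤ n)]; ring
    rw [this]
    ring
  have hxx : x ⬝ᵥ x = (y : ℝ) * ((n : ℝ) - y) * n := by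
    rw [show x ⬝ᵥ x = ∑ v, x v * x v from rfl]
    rw [hx]
    have : ∀ v : V, (if v ∈ Y then ((n : ℝ) - y) else (-(y:ℝ))) *
        (if v ∈ Y then ((n : ℝ) - y) else (-(y:ℝ)))
        = if v ∈ Y then ((n : ℝ) - y)^2 else (y:ℝ)^2 := by
      intro v; split_ifs <;> ring
    rw [Finset.sum_congr rfl fun v _ => this v]
    rw [Finset.sum_ite, Finset.sum_const, Finset.sum_const]
    rw [Finset.filter_mem_eq_inter, Finset.univ_inter, hcompl]
    rw [nsmul_eq_mul, nsmul_eq_mul, ← hy]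
    have hcast : ((n - y : ℕ) : ℝ) = (n : ℝ) - y := by
      push_cast [Nat.cast_sub (by omega : y ≤ n)]; ring
    rw [hcast]
    ring
  have hquad := quad_identity G hreg x
  have hcross := cross_double G Y ((n : ℝ) - y) (-(y : ℝ))
  have hqc : 2 * ((k : ℝ) * (x ⬝ᵥ x) - x ⬝ᵥ (G.adjMatrix ℝ *ᵥ x))
      = 2 * (crossCard G Y : ℝ) * (n : ℝ) ^ 2 := by
    rw [← hquad, hx]
    rw [hcross]
    have : ((n : ℝ) - y - -(y : ℝ)) = (n : ℝ) := by ring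
    rw [this]
  have hr := hray x hsum
  -- (k - lam1) * (y * (n-y) * n) ≤ 2 * crossCard * n^2 / 2...
  have key : ((k : ℝ) - lam1) * ((y : ℝ) * ((n : ℝ) - y) * n)
      ≤ (crossCard G Y : ℝ) * (n : ℝ) ^ 2 := by
    have e1 : (k : ℝ) * (x ⬝ᵥ x) - x ⬝ᵥ (G.adjMatrix ℝ *ᵥ x)
        = (crossCard G Y : ℝ) * (n : ℝ) ^ 2 := by linarith
    calc ((k : ℝ) - lam1) * ((y : ℝ) * ((n : ℝ) - y) * n)
        = (k : ℝ) * (x ⬝ᵥ x) - lam1 * (x ⬝ᵥ x) := by rw [hxx]; ring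
      _ ≤ (k : ℝ) * (x ⬝ᵥ x) - x ⬝ᵥ (G.adjMatrix ℝ *ᵥ x) := by linarith
      _ = (crossCard G Y : ℝ) * (n : ℝ) ^ 2 := e1
  have hny : (y : ℝ) ≤ (n : ℝ) - y := by
    have : (2 * y : ℝ) ≤ n := by exact_mod_cast hyn
    linarith
  have hypos : (0 : ℝ) < y := by exact_mod_cast hy1
  have hnypos : (0 : ℝ) < (n : ℝ) - y := lt_of_lt_of_le hypos hny
  have hnpos : (0 : ℝ) < n := by
    have h2 : (2 * y : ℝ) ≤ n := by exact_mod_cast hyn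
    linarith
  have hC : (0 : ℝ) ≤ crossCard G Y := Nat.cast_nonneg _
  have h5 : (n : ℝ) * n ≤ (2 * ((n : ℝ) - y)) * n :=
    mul_le_mul_of_nonneg_right (by linarith) (le_of_lt hnpos)
  have h6 : (crossCard G Y : ℝ) * ((n : ℝ) * n)
      ≤ (crossCard G Y : ℝ) * ((2 * ((n : ℝ) - y)) * n) :=
    mul_le_mul_of_nonneg_left h5 hC
  have final : (((k : ℝ) - lam1) * y) * (((n : ℝ) - y) * n)
      ≤ (2 * (crossCard G Y : ℝ)) * (((n : ℝ) - y) * n) := by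
    nlinarith [key, h6]
  exact le_of_mul_le_mul_right final (by positivity)

private lemma coarea {h : ℝ} (hh0 : 0 ≤ h) (hnv : Nonempty V)
    (g : V → ℝ) (hg0 : ∀ v, 0 ≤ g v)
    (hbound : ∀ Y : Finset V, Y.Nonempty → 2 * Y.card ≤ Fintype.card V →
      h * Y.card ≤ crossCard G Y)
    (hsupp : 2 * (Finset.univ.filter (fun v => 0 < g v)).card ≤ Fintype.card V) :
    2 * h * (∑ v, g v ^ 2) ≤ ∑ u, ∑ v, G.adjMatrix ℝ u v * |g u ^ 2 - g v ^ 2| := by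
  classical
  set n := Fintype.card V with hn
  have hn1 : 1 ≤ n := Fintype.card_pos
  set e : Fin n ≃ V := (Fintype.equivFin V).symm with he
  set w : Fin n → ℝ := fun i => -(g (e i)) ^ 2 with hw
  set σ : Equiv.Perm (Fin n) := Tuple.sort w with hσ
  set ord : Fin n ≃ V := σ.trans e with hord
  set a : ℕ → ℝ := fun l => if hl : l < n then (g (ord ⟨l, hl⟩)) ^ 2 else 0 with ha
  set rank : V → ℕ := fun v => ((ord.symm v : Fin n) : ℕ) with hrank
  have hrank_lt : ∀ v, rank v < n := fun v => (ord.symm v).isLt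
  have ha_rank : ∀ v, a (rank v) = g v ^ 2 := by
    intro v
    rw [ha]
    dsimp only
    rw [dif_pos (hrank_lt v)]
    congr 1
    have h1 : (⟨rank v, hrank_lt v⟩ : Fin n) = ord.symm v := by
      apply Fin.ext; rfl
    rw [h1, Equiv.apply_symm_apply]
  have ha_nonneg : ∀ l, 0 ≤ a l := by
    intro l
    rw [ha]
    dsimp only
    split
    · positivity
    · exact le_refl 0
  have ha_anti : ∀ {l m : ℕ}, l ≤ m → a m ≤ a l := by
    intro l m hlm
    by_cases hm : m < n
    · have hl : l < n := lt_of_le_of_lt hlm hm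
      have hmono := Tuple.monotone_sort w
        (show (⟨l, hl⟩ : Fin n) ≤ ⟨m, hm⟩ from hlm)
      simp only [Function.comp_apply, hw] at hmono
      rw [ha]
      dsimp only
      rw [dif_pos hm, dif_pos hl]
      have h1 : g (ord ⟨l, hl⟩) ^ 2 = g (e (σ ⟨l, hl⟩)) ^ 2 := rfl
      have h2 : g (ord ⟨m, hm⟩) ^ 2 = g (e (σ ⟨m, hm⟩)) ^ 2 := rfl
      rw [h1, h2]
      linarith
    · have : a m = 0 := by rw [ha]; exact dif_neg hm
      rw [this]
      exact ha_nonneg l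
  have ha_top : a n = 0 := by rw [ha]; exact dif_neg (lt_irrefl n)
  -- the level sets
  set S : ℕ → Finset V := fun l => Finset.univ.filter (fun v => rank v ≤ l) with hS
  have hScard : ∀ l : ℕ, l < n → (S l).card = l + 1 := by
    intro l hl
    rw [hS]
    dsimp only
    rw [show l + 1 = (Finset.range (l + 1)).card from (Finset.card_range _).symm]
    refine Finset.card_bij' (fun v _ => rank v)
      (fun m hm => ord ⟨m, lt_of_lt_of_le (Finset.mem_range.mp hm) (Nat.succ_le_of_lt hl)⟩)
      ?_ ?_ ?_ ?_
    · intro v hv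
      simp only [Finset.mem_filter, Finset.mem_univ, true_and] at hv
      exact Finset.mem_range.mpr (Nat.lt_succ_of_le hv)
    · intro m hm
      simp only [Finset.mem_filter, Finset.mem_univ, true_and]
      show ((ord.symm (ord _) : Fin n) : ℕ) ≤ l
      rw [Equiv.symm_apply_apply]
      exact Nat.lt_succ_iff.mp (Finset.mem_range.mp hm)
    · intro v hv
      rw [Equiv.apply_eq_iff_eq_symm_apply]
    · intro m hm
      show ((ord.symm (ord _) : Fin n) : ℕ) = m
      rw [Equiv.symm_apply_apply]
      done
  -- per-pair identity
  have step1 : ∀ u v : V, G.adjMatrix ℝ u v * |g u ^ 2 - g v ^ 2|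
      = ∑ l ∈ Finset.range n, (if ¬(rank u ≤ l ↔ rank v ≤ l)
          then G.adjMatrix ℝ u v * (a l - a (l + 1)) else 0) := by
    intro u v
    have hij : min (rank u) (rank v) ≤ max (rank u) (rank v) := min_le_max
    have hjn : max (rank u) (rank v) ≤ n :=
      le_of_lt (max_lt (hrank_lt u) (hrank_lt v))
    have habs : |g u ^ 2 - g v ^ 2|
        = a (min (rank u) (rank v)) - a (max (rank u) (rank v)) := by
      rcases le_total (rank u) (rank v) with hc | hc
      · rw [min_eq_left hc, max_eq_right hc, ← ha_rank u, ← ha_rank v]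
        exact abs_of_nonneg (sub_nonneg.mpr (ha_anti hc))
      · rw [min_eq_right hc, max_eq_left hc, ← ha_rank u, ← ha_rank v]
        rw [abs_of_nonpos (sub_nonpos.mpr (ha_anti hc)), neg_sub]
    have hcond : ∀ l : ℕ, (¬(rank u ≤ l ↔ rank v ≤ l))
        ↔ (min (rank u) (rank v) ≤ l ∧ l < max (rank u) (rank v)) := by
      intro l
      omega
    have hrw : ∀ l : ℕ, (if ¬(rank u ≤ l ↔ rank v ≤ l)
          then G.adjMatrix ℝ u v * (a l - a (l + 1)) else 0)
        = (if l ∈ Finset.Ico (min (rank u) (rank v)) (max (rank u) (rank v))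
          then G.adjMatrix ℝ u v * (a l - a (l + 1)) else 0) := by
      intro l
      refine if_congr ?_ rfl rfl
      rw [hcond l, Finset.mem_Ico]
    rw [Finset.sum_congr rfl fun l _ => hrw l]
    rw [Finset.sum_ite_mem]
    have hsub : Finset.Ico (min (rank u) (rank v)) (max (rank u) (rank v))
        ⊆ Finset.range n := by
      intro l hl
      rw [Finset.mem_range]
      exact lt_of_lt_of_le (Finset.mem_Ico.mp hl).2 hjn
    rw [Finset.inter_eq_right.mpr hsub]
    rw [← Finset.mul_sum, tele_sum a hij, habs]
  -- total sum rewrite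
  have step2 : ∑ u, ∑ v, G.adjMatrix ℝ u v * |g u ^ 2 - g v ^ 2|
      = ∑ l ∈ Finset.range n, ∑ u, ∑ v, (if ¬(rank u ≤ l ↔ rank v ≤ l)
          then G.adjMatrix ℝ u v * (a l - a (l + 1)) else 0) := by
    rw [Finset.sum_congr rfl fun u _ => Finset.sum_congr rfl fun v _ => step1 u v]
    rw [Finset.sum_congr rfl fun u _ => Finset.sum_comm]
    rw [Finset.sum_comm]
  -- inner double sum as crossing count
  have step3 : ∀ l : ℕ, ∑ u, ∑ v, (if ¬(rank u ≤ l ↔ rank v ≤ l)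
        then G.adjMatrix ℝ u v * (a l - a (l + 1)) else 0)
      = (2 * crossCard G (S l) : ℝ) * (a l - a (l + 1)) := by
    intro l
    have hpt : ∀ u v : V, (if ¬(rank u ≤ l ↔ rank v ≤ l)
          then G.adjMatrix ℝ u v * (a l - a (l + 1)) else 0)
        = (if (¬(rank u ≤ l ↔ rank v ≤ l)) ∧ G.Adj u v then (1 : ℝ) else 0)
            * (a l - a (l + 1)) := by
      intro u v
      by_cases h1 : ¬(rank u ≤ l ↔ rank v ≤ l) <;> by_cases h2 : G.Adj u v <;>
        simp [h1, h2, SimpleGraph.adjMatrix_apply]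
    rw [Finset.sum_congr rfl fun u _ => Finset.sum_congr rfl fun v _ => hpt u v]
    have : ∀ u : V, ∑ v, (if (¬(rank u ≤ l ↔ rank v ≤ l)) ∧ G.Adj u v then (1 : ℝ) else 0)
          * (a l - a (l + 1))
        = (∑ v, if (¬(rank u ≤ l ↔ rank v ≤ l)) ∧ G.Adj u v then (1 : ℝ) else 0)
            * (a l - a (l + 1)) := fun u => (Finset.sum_mul _ _ _).symm
    rw [Finset.sum_congr rfl fun u _ => this u, ← Finset.sum_mul]
    congr 1
    -- counting
    have hcount : ∑ u, ∑ v, (if (¬(rank u ≤ l ↔ rank v ≤ l)) ∧ G.Adj u v then (1 : ℝ) else 0)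
        = ((Finset.univ.filter (fun p : V × V =>
            (¬(rank p.1 ≤ l ↔ rank p.2 ≤ l)) ∧ G.Adj p.1 p.2)).card : ℝ) := by
      rw [← Finset.sum_product']
      rw [Finset.univ_product_univ]
      exact Finset.sum_boole _ _
    rw [hcount]
    have hsplit : (Finset.univ.filter (fun p : V × V =>
          (¬(rank p.1 ≤ l ↔ rank p.2 ≤ l)) ∧ G.Adj p.1 p.2))
        = (Finset.univ.filter (fun p : V × V => p.1 ∈ S l ∧ p.2 ∉ S l ∧ G.Adj p.1 p.2))
          ∪ (Finset.univ.filter (fun p : V × V => p.1 ∉ S l ∧ p.2 ∈ S l ∧ G.Adj p.1 p.2)) := by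
      rw [← Finset.filter_or]
      refine Finset.filter_congr fun p _ => ?_
      have h1 : p.1 ∈ S l ↔ rank p.1 ≤ l := by
        rw [hS]; simp
      have h2 : p.2 ∈ S l ↔ rank p.2 ≤ l := by
        rw [hS]; simp
      rw [h1, h2]
      tauto
    rw [hsplit]
    have hdisj : Disjoint
        (Finset.univ.filter (fun p : V × V => p.1 ∈ S l ∧ p.2 ∉ S l ∧ G.Adj p.1 p.2))
        (Finset.univ.filter (fun p : V × V => p.1 ∉ S l ∧ p.2 ∈ S l ∧ G.Adj p.1 p.2)) := by
      rw [Finset.disjoint_left]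
      rintro p h1 h2
      simp only [Finset.mem_filter] at h1 h2
      exact h2.2.1 h1.2.1
    rw [Finset.card_union_of_disjoint hdisj, cross_swap G (S l)]
    show (((crossCard G (S l)) + crossCard G (S l) : ℕ) : ℝ) = _
    push_cast
    ring
  -- the per-level bound
  have step4 : ∀ l ∈ Finset.range n,
      2 * h * ((l : ℝ) + 1) * (a l - a (l + 1))
        ≤ (2 * crossCard G (S l) : ℝ) * (a l - a (l + 1)) := by
    intro l hl
    rw [Finset.mem_range] at hl
    have hd : 0 ≤ a l - a (l + 1) := sub_nonneg.mpr (ha_anti (Nat.le_succ l))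
    rcases eq_or_lt_of_le (ha_nonneg l) with hzero | hpos
    · have : a (l + 1) = 0 := le_antisymm (by rw [← hzero] at hd; linarith) (ha_nonneg _)
      rw [← hzero, this]
      simp
    · -- a l > 0
      have hSsub : S l ⊆ Finset.univ.filter (fun v => 0 < g v) := by
        intro v hv
        rw [hS] at hv
        simp only [Finset.mem_filter, Finset.mem_univ, true_and] at hv ⊢
        have : a l ≤ a (rank v) := ha_anti hv
        rw [ha_rank] at this
        have hg2 : 0 < g v ^ 2 := lt_of_lt_of_le hpos this
        rcases lt_or_eq_of_le (hg0 v) with h' | h'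
        · exact h'
        · exfalso; rw [← h'] at hg2; simp at hg2
      have hScard' : (S l).card = l + 1 := hScard l hl
      have hSne : (S l).Nonempty := by
        rw [← Finset.card_pos, hScard']; omega
      have hS2 : 2 * (S l).card ≤ Fintype.card V := by
        calc 2 * (S l).card ≤ 2 * (Finset.univ.filter (fun v => 0 < g v)).card :=
              Nat.mul_le_mul_left 2 (Finset.card_le_card hSsub)
          _ ≤ n := hsupp
      have hb := hbound (S l) hSne hS2
      rw [hScard'] at hb
      push_cast at hb
      have : 2 * h * ((l : ℝ) + 1) ≤ 2 * crossCard G (S l) := by linarith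
      exact mul_le_mul_of_nonneg_right this hd
  -- assemble
  rw [step2, Finset.sum_congr rfl fun l _ => step3 l]
  have lower : ∑ l ∈ Finset.range n, 2 * h * ((l : ℝ) + 1) * (a l - a (l + 1))
      ≤ ∑ l ∈ Finset.range n, (2 * crossCard G (S l) : ℝ) * (a l - a (l + 1)) :=
    Finset.sum_le_sum step4
  have habel : ∑ l ∈ Finset.range n, 2 * h * ((l : ℝ) + 1) * (a l - a (l + 1))
      = 2 * h * (∑ v, g v ^ 2) := by
    have h1 : ∑ l ∈ Finset.range n, 2 * h * ((l : ℝ) + 1) * (a l - a (l + 1))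
        = 2 * h * ∑ l ∈ Finset.range n, ((l : ℝ) + 1) * (a l - a (l + 1)) := by
      rw [Finset.mul_sum]
      exact Finset.sum_congr rfl fun l _ => by ring
    rw [h1, abel_sum a n, ha_top]
    have h2 : ∑ l ∈ Finset.range n, a l = ∑ v, g v ^ 2 := by
      rw [← Fin.sum_univ_eq_sum_range a n]
      have h3 : ∀ j : Fin n, a (j : ℕ) = g (ord j) ^ 2 := by
        intro j
        rw [ha]
        dsimp only
        rw [dif_pos j.isLt]
      rw [Finset.sum_congr rfl fun j _ => h3 j]
      exact Equiv.sum_comp ord (fun v => g v ^ 2)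
    rw [h2]
    ring
  linarith [lower, habel.symm.le]

private lemma dir_hard {k : ℕ} (hk : 0 < k) (hreg : G.IsRegularOfDegree k) (hnv : Nonempty V)
    {lam1 h : ℝ} (hh0 : 0 ≤ h)
    (hbound : ∀ Y : Finset V, Y.Nonempty → 2 * Y.card ≤ Fintype.card V →
      h * Y.card ≤ crossCard G Y)
    (f : V → ℝ) (hf0 : f ≠ 0) (hfsum : ∑ v, f v = 0)
    (hfeig : G.adjMatrix ℝ *ᵥ f = lam1 • f)
    (hsupp : 2 * (Finset.univ.filter (fun v => 0 < f v)).card ≤ Fintype.card V) :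
    h ^ 2 / (2 * k) ≤ (k : ℝ) - lam1 := by
  classical
  set A := G.adjMatrix ℝ with hA
  set g : V → ℝ := fun v => max (f v) 0 with hg
  have hg0 : ∀ v, 0 ≤ g v := fun v => le_max_right _ _
  have hgf : ∀ v, f v ≤ g v := fun v => le_max_left _ _
  have hgsupp : ∀ v, (0 < g v ↔ 0 < f v) := by
    intro v
    rw [hg]
    simp only [lt_max_iff]
    constructor
    · rintro (h1 | h1)
      · exact h1
      · exact absurd h1 (lt_irrefl 0)
    · exact Or.inl
  have hsuppg : 2 * (Finset.univ.filter (fun v => 0 < g v)).card ≤ Fintype.card V := by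
    have : (Finset.univ.filter (fun v => 0 < g v))
        = (Finset.univ.filter (fun v => 0 < f v)) :=
      Finset.filter_congr fun v _ => by rw [hgsupp v]
    rw [this]
    exact hsupp
  have hexpos : ∃ v, 0 < f v := by
    by_contra hall
    push_neg at hall
    have : ∀ v ∈ Finset.univ, f v ≤ 0 := fun v _ => hall v
    have hzero := (Finset.sum_eq_zero_iff_of_nonpos this).mp hfsum
    exact hf0 (funext fun v => hzero v (Finset.mem_univ v))
  obtain ⟨v₀, hv₀⟩ := hexpos
  set S := ∑ v, g v ^ 2 with hS
  have hSpos : 0 < S := by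
    rw [hS]
    apply Finset.sum_pos' (fun v _ => by positivity)
    exact ⟨v₀, Finset.mem_univ v₀, by
      have : g v₀ = f v₀ := max_eq_left (le_of_lt hv₀)
      rw [this]; positivity⟩
  have hgg : g ⬝ᵥ g = S := by
    rw [hS]
    simp [dotProduct, sq]
  -- (a) quadratic form bound
  have hQL : (k : ℝ) * (g ⬝ᵥ g) - g ⬝ᵥ (A *ᵥ g) ≤ ((k : ℝ) - lam1) * S := by
    have expand : (k : ℝ) * (g ⬝ᵥ g) - g ⬝ᵥ (A *ᵥ g)
        = ∑ v, g v * ((k : ℝ) * g v - (A *ᵥ g) v) := by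
      simp only [dotProduct, Finset.mul_sum, ← Finset.sum_sub_distrib]
      exact Finset.sum_congr rfl fun v _ => by ring
    rw [expand]
    have hterm : ∀ v, g v * ((k : ℝ) * g v - (A *ᵥ g) v) ≤ ((k : ℝ) - lam1) * g v ^ 2 := by
      intro v
      rcases le_or_gt (f v) 0 with hv | hv
      · have : g v = 0 := max_eq_right hv
        rw [this]
        simp
      · have hgv : g v = f v := max_eq_left (le_of_lt hv)
        have hmv : (A *ᵥ f) v ≤ (A *ᵥ g) v := by
          rw [hA, SimpleGraph.adjMatrix_mulVec_apply, SimpleGraph.adjMatrix_mulVec_apply]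
          exact Finset.sum_le_sum fun u _ => hgf u
        have heigv : (A *ᵥ f) v = lam1 * f v := by
          rw [hA, hfeig]; rfl
        rw [hgv]
        nlinarith [hmv, heigv, hv]
    calc ∑ v, g v * ((k : ℝ) * g v - (A *ᵥ g) v)
        ≤ ∑ v, ((k : ℝ) - lam1) * g v ^ 2 := Finset.sum_le_sum fun v _ => hterm v
      _ = ((k : ℝ) - lam1) * S := by rw [← Finset.mul_sum, hS]
  have hQLnn : 0 ≤ (k : ℝ) * (g ⬝ᵥ g) - g ⬝ᵥ (A *ᵥ g) := by
    have := quad_identity G hreg g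
    have hnn : 0 ≤ ∑ u, ∑ v, G.adjMatrix ℝ u v * (g u - g v) ^ 2 :=
      Finset.sum_nonneg fun u _ => Finset.sum_nonneg fun v _ =>
        mul_nonneg (adj_nonneg G u v) (sq_nonneg _)
    rw [hA]
    linarith
  have hklam : 0 ≤ (k : ℝ) - lam1 := by nlinarith [hQL, hQLnn, hSpos]
  -- (b) coarea
  have hco := coarea G hh0 hnv g hg0 hbound hsuppg
  -- (c) Cauchy-Schwarz
  set T := ∑ u, ∑ v, A u v * |g u ^ 2 - g v ^ 2| with hT
  have hCS : T ^ 2 ≤ (∑ u, ∑ v, A u v * (g u - g v) ^ 2)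
      * (∑ u, ∑ v, A u v * (g u + g v) ^ 2) := by
    have hfact : ∀ u v : V, A u v * |g u ^ 2 - g v ^ 2|
        = (A u v * |g u - g v|) * (A u v * |g u + g v|) := by
      intro u v
      rw [hA]
      simp only [SimpleGraph.adjMatrix_apply]
      split
      · rw [one_mul, one_mul, one_mul, ← abs_mul]
        congr 1
        ring
      · simp
    have hsq1 : ∀ u v : V, (A u v * |g u - g v|) ^ 2 = A u v * (g u - g v) ^ 2 := by
      intro u v
      rw [mul_pow, sq_abs]
      congr 1
      rw [hA]
      simp only [SimpleGraph.adjMatrix_apply]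
      split <;> norm_num
    have hsq2 : ∀ u v : V, (A u v * |g u + g v|) ^ 2 = A u v * (g u + g v) ^ 2 := by
      intro u v
      rw [mul_pow, sq_abs]
      congr 1
      rw [hA]
      simp only [SimpleGraph.adjMatrix_apply]
      split <;> norm_num
    have hT' : T = ∑ p ∈ Finset.univ ×ˢ Finset.univ,
        (A p.1 p.2 * |g p.1 - g p.2|) * (A p.1 p.2 * |g p.1 + g p.2|) := by
      rw [hT, ← Finset.sum_product']
      exact Finset.sum_congr rfl fun p _ => hfact p.1 p.2
    rw [hT']
    have := Finset.sum_mul_sq_le_sq_mul_sq (Finset.univ ×ˢ Finset.univ)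
      (fun p : V × V => A p.1 p.2 * |g p.1 - g p.2|)
      (fun p : V × V => A p.1 p.2 * |g p.1 + g p.2|)
    calc (∑ p ∈ Finset.univ ×ˢ Finset.univ,
          (A p.1 p.2 * |g p.1 - g p.2|) * (A p.1 p.2 * |g p.1 + g p.2|)) ^ 2
        ≤ (∑ p ∈ Finset.univ ×ˢ Finset.univ, (A p.1 p.2 * |g p.1 - g p.2|) ^ 2)
          * (∑ p ∈ Finset.univ ×ˢ Finset.univ, (A p.1 p.2 * |g p.1 + g p.2|) ^ 2) := this
      _ = (∑ u, ∑ v, A u v * (g u - g v) ^ 2) * (∑ u, ∑ v, A u v * (g u + g v) ^ 2) := by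
          rw [← Finset.sum_product', ← Finset.sum_product']
          congr 1
          · exact Finset.sum_congr rfl fun p _ => hsq1 p.1 p.2
          · exact Finset.sum_congr rfl fun p _ => hsq2 p.1 p.2
  -- (d) bound on the plus-sum
  have hplus : ∑ u, ∑ v, A u v * (g u + g v) ^ 2 ≤ 4 * k * S := by
    have hterm : ∀ u v : V, A u v * (g u + g v) ^ 2
        ≤ A u v * (2 * g u ^ 2) + A u v * (2 * g v ^ 2) := by
      intro u v
      have h1 : (g u + g v) ^ 2 ≤ 2 * g u ^ 2 + 2 * g v ^ 2 := by nlinarith [sq_nonneg (g u - g v)]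
      have := mul_le_mul_of_nonneg_left h1 (adj_nonneg G u v)
      rw [hA]
      linarith [this]
    calc ∑ u, ∑ v, A u v * (g u + g v) ^ 2
        ≤ ∑ u, ∑ v, (A u v * (2 * g u ^ 2) + A u v * (2 * g v ^ 2)) :=
          Finset.sum_le_sum fun u _ => Finset.sum_le_sum fun v _ => hterm u v
      _ = (∑ u, ∑ v, A u v * (2 * g u ^ 2)) + (∑ u, ∑ v, A u v * (2 * g v ^ 2)) := by
          rw [← Finset.sum_add_distrib]
          exact Finset.sum_congr rfl fun u _ => Finset.sum_add_distrib
      _ = 2 * k * S + 2 * k * S := by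
          congr 1
          · rw [Finset.sum_congr rfl fun u (_ : u ∈ univ) => show
                ∑ v, A u v * (2 * g u ^ 2) = (k : ℝ) * (2 * g u ^ 2) by
                  rw [← Finset.sum_mul, hA, adj_row_sum G hreg u]]
            rw [hS, Finset.mul_sum]
            exact Finset.sum_congr rfl fun u _ => by ring
          · rw [Finset.sum_comm]
            rw [Finset.sum_congr rfl fun v (_ : v ∈ univ) => show
                ∑ u, A u v * (2 * g v ^ 2) = (k : ℝ) * (2 * g v ^ 2) by
                  rw [← Finset.sum_mul, hA, adj_col_sum G hreg v]]
            rw [hS, Finset.mul_sum]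
            exact Finset.sum_congr rfl fun v _ => by ring
      _ = 4 * k * S := by ring
  -- (e) minus-sum equals twice the quadratic form
  have hminus : ∑ u, ∑ v, A u v * (g u - g v) ^ 2
      = 2 * ((k : ℝ) * (g ⬝ᵥ g) - g ⬝ᵥ (A *ᵥ g)) := by
    rw [hA]
    exact quad_identity G hreg g
  -- combine
  have hT2 : T ^ 2 ≤ 8 * k * ((k : ℝ) - lam1) * S ^ 2 := by
    have h1 : ∑ u, ∑ v, A u v * (g u - g v) ^ 2 ≤ 2 * (((k : ℝ) - lam1) * S) := by
      rw [hminus]; linarith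
    have h2 : 0 ≤ ∑ u, ∑ v, A u v * (g u - g v) ^ 2 := by
      rw [hminus]; linarith
    have h3 : 0 ≤ ∑ u, ∑ v, A u v * (g u + g v) ^ 2 :=
      Finset.sum_nonneg fun u _ => Finset.sum_nonneg fun v _ =>
        mul_nonneg (by rw [hA]; exact adj_nonneg G u v) (sq_nonneg _)
    calc T ^ 2 ≤ (∑ u, ∑ v, A u v * (g u - g v) ^ 2)
        * (∑ u, ∑ v, A u v * (g u + g v) ^ 2) := hCS
      _ ≤ (2 * (((k : ℝ) - lam1) * S)) * (4 * k * S) := by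
          apply mul_le_mul h1 hplus h3
          positivity
      _ = 8 * k * ((k : ℝ) - lam1) * S ^ 2 := by ring
  have hTlow : 2 * h * S ≤ T := hco
  have hh2 : h ^ 2 ≤ 2 * k * ((k : ℝ) - lam1) := by
    have h4 : (2 * h * S) ^ 2 ≤ T ^ 2 := by
      apply sq_le_sq'
      · nlinarith [hTlow, hh0, hSpos]
      · exact hTlow
    have h5 : 4 * h ^ 2 * S ^ 2 ≤ 8 * k * ((k : ℝ) - lam1) * S ^ 2 := by nlinarith [h4, hT2]
    have hS2 : 0 < S ^ 2 := by positivity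
    nlinarith [h5, hS2]
  rw [div_le_iff₀ (by positivity : (0 : ℝ) < 2 * k)]
  linarith

end CheegerAux

/-- **Cheeger inequalities** for a finite connected `k`-regular graph (`k ≥ 3`) on at least
two vertices: `h(X)²/(2k) ≤ k − λ₁(X) ≤ 2·h(X)`, where `λ₁(X)` is the largest adjacency
eigenvalue different from `k`, and `h(X)` is the Cheeger constant. -/
theorem cheeger_inequalities
    {V : Type*} [Fintype V] [DecidableEq V]
    (G : SimpleGraph V) [DecidableRel G.Adj]
    (k : ℕ) (hk : 3 ≤ k)
    (hconn : G.Connected)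
    (hreg : G.IsRegularOfDegree k)
    (hcard : 2 ≤ Fintype.card V)
    (lam1 : ℝ)
    (hlam1 : lam1 = sSup {μ : ℝ | μ ≠ (k : ℝ) ∧
      ∃ x : V → ℝ, x ≠ 0 ∧ G.adjMatrix ℝ *ᵥ x = μ • x})
    (h : ℝ)
    (hh : h = sInf {r : ℝ | ∃ Y : Finset V, Y.Nonempty ∧ 2 * Y.card ≤ Fintype.card V ∧
      r = ((Finset.univ.filter
        (fun p : V × V => p.1 ∈ Y ∧ p.2 ∉ Y ∧ G.Adj p.1 p.2)).card : ℝ) / Y.card}) :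
    h ^ 2 / (2 * k) ≤ (k : ℝ) - lam1 ∧ (k : ℝ) - lam1 ≤ 2 * h := by
  classical
  have hnv : Nonempty V := hconn.nonempty
  have hlam : lam1 = sSup (Espec G k) := hlam1
  obtain ⟨hspec_mem, hray⟩ := spectral G k hconn hreg hcard
  rw [← hlam] at hspec_mem hray
  obtain ⟨hlamne, f, hf0, hfeig⟩ := hspec_mem
  set R : Set ℝ := {r : ℝ | ∃ Y : Finset V, Y.Nonempty ∧ 2 * Y.card ≤ Fintype.card V ∧
      r = ((Finset.univ.filter
        (fun p : V × V => p.1 ∈ Y ∧ p.2 ∉ Y ∧ G.Adj p.1 p.2)).card : ℝ) / Y.card} with hR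
  have hhR : h = sInf R := hh
  have hRne : R.Nonempty := by
    obtain ⟨v⟩ := hnv
    refine ⟨_, ⟨({v} : Finset V), Finset.singleton_nonempty v, ?_, rfl⟩⟩
    simpa using hcard
  have hRnonneg : ∀ r ∈ R, (0 : ℝ) ≤ r := by
    rintro r ⟨Y, hY, h2, rfl⟩
    positivity
  have hRbdd : BddBelow R := ⟨0, fun r hr => hRnonneg r hr⟩
  have hh0 : 0 ≤ h := by rw [hhR]; exact le_csInf hRne hRnonneg
  have hbound : ∀ Y : Finset V, Y.Nonempty → 2 * Y.card ≤ Fintype.card V →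
      h * Y.card ≤ crossCard G Y := by
    intro Y hY h2
    have hmem : ((crossCard G Y : ℝ) / Y.card) ∈ R := ⟨Y, hY, h2, rfl⟩
    have hle : h ≤ (crossCard G Y : ℝ) / Y.card := by rw [hhR]; exact csInf_le hRbdd hmem
    have hc : (0 : ℝ) < Y.card := by exact_mod_cast hY.card_pos
    calc h * Y.card ≤ ((crossCard G Y : ℝ) / Y.card) * Y.card :=
          mul_le_mul_of_nonneg_right hle (le_of_lt hc)
      _ = crossCard G Y := div_mul_cancel₀ _ (ne_of_gt hc)
  have hfsum : ∑ v, f v = 0 := by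
    have h1 : lam1 * ∑ v, f v = (k : ℝ) * ∑ v, f v := by
      calc lam1 * ∑ v, f v = ∑ v, lam1 * f v := Finset.mul_sum _ _ _
        _ = ∑ v, (G.adjMatrix ℝ *ᵥ f) v :=
            (Finset.sum_congr rfl fun v _ => by rw [hfeig]; rfl).symm
        _ = ∑ u, (∑ v, G.adjMatrix ℝ v u) * f u := by
            simp only [mulVec, dotProduct]
            rw [Finset.sum_comm]
            exact Finset.sum_congr rfl fun u _ => (Finset.sum_mul _ _ _).symm
        _ = ∑ u, (k : ℝ) * f u :=
            Finset.sum_congr rfl fun u _ => by rw [adj_col_sum G hreg u]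
        _ = (k : ℝ) * ∑ v, f v := (Finset.mul_sum _ _ _).symm
    have h2 : (lam1 - (k : ℝ)) * ∑ v, f v = 0 := by rw [sub_mul, h1]; ring
    rcases mul_eq_zero.mp h2 with h3 | h3
    · exact absurd (by linarith : lam1 = (k : ℝ)) hlamne
    · exact h3
  constructor
  · by_cases hcase : 2 * (Finset.univ.filter (fun v => 0 < f v)).card ≤ Fintype.card V
    · exact dir_hard G (by omega) hreg hnv hh0 hbound f hf0 hfsum hfeig hcase
    · have hfeig' : G.adjMatrix ℝ *ᵥ (-f) = lam1 • (-f) := by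
        rw [Matrix.mulVec_neg, hfeig, smul_neg]
      have hf0' : (-f) ≠ 0 := neg_ne_zero.mpr hf0
      have hfsum' : ∑ v, (-f) v = 0 := by
        simp only [Pi.neg_apply, Finset.sum_neg_distrib, hfsum, neg_zero]
      have hsupp' : 2 * (Finset.univ.filter (fun v => 0 < (-f) v)).card
          ≤ Fintype.card V := by
        have hdisj : Disjoint (Finset.univ.filter (fun v => 0 < f v))
            (Finset.univ.filter (fun v => 0 < (-f) v)) := by
          rw [Finset.disjoint_left]
          intro v h1 h2
          simp only [Finset.mem_filter, Finset.mem_univ, true_and, Pi.neg_apply] at h1 h2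
          linarith
        have hsumcard : (Finset.univ.filter (fun v => 0 < f v)).card
            + (Finset.univ.filter (fun v => 0 < (-f) v)).card ≤ Fintype.card V := by
          rw [← Finset.card_union_of_disjoint hdisj]
          exact Finset.card_le_univ _
        omega
      exact dir_hard G (by omega) hreg hnv hh0 hbound (-f) hf0' hfsum' hfeig' hsupp'
  · have key : ((k : ℝ) - lam1) / 2 ≤ h := by
      rw [hhR]
      refine le_csInf hRne ?_
      rintro r ⟨Y, hY, h2, rfl⟩
      have hde := dir_easy G hreg lam1 hray Y hY h2
      have hc : (0 : ℝ) < Y.card := by exact_mod_cast hY.card_pos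
      rw [div_le_div_iff₀ (by norm_num) hc]
      have : ((Finset.univ.filter
          (fun p : V × V => p.1 ∈ Y ∧ p.2 ∉ Y ∧ G.Adj p.1 p.2)).card : ℝ)
          = (crossCard G Y : ℝ) := rfl
      rw [this]
      linarith [hde]
    linarith
end

section
/- (Hashimoto) Let q ≥ 2 and let X be a finite connected (q+1)-regular graph with non-backtracking matrix B. Then every eigenvalue λ of the adjacency matrix of X satisfies |λ| = q+1 or |λ| ≤ 2√q (i.e. X is Ramanujan) if and only if every complex eigenvalue μ of B satisfies |μ| = q or |μ| ≤ √q (i.e. the non-backtracking digraph D_X is a Ramanujan digraph). -/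
open Matrix

private lemma quad_root_abs_le {l qr : ℝ} (hq : 0 < qr) (hl : |l| ≤ 2 * Real.sqrt qr)
    {μ : ℂ} (hμ : μ ^ 2 - (l : ℂ) * μ + (qr : ℂ) = 0) :
    ‖μ‖ ≤ Real.sqrt qr := by
  have hl2 : l ^ 2 ≤ 4 * qr := by
    nlinarith [Real.sq_sqrt hq.le, abs_nonneg l, Real.sqrt_nonneg qr, sq_abs l]
  have hconj : (starRingEnd ℂ) μ ^ 2 - (l : ℂ) * (starRingEnd ℂ) μ + (qr : ℂ) = 0 := by
    have h := congrArg (starRingEnd ℂ) hμ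
    simpa using h
  have hfac : (μ - (starRingEnd ℂ) μ) * (μ + (starRingEnd ℂ) μ - (l : ℂ)) = 0 := by
    linear_combination hμ - hconj
  rcases mul_eq_zero.mp hfac with h | h
  · have h' : (starRingEnd ℂ) μ = μ := (sub_eq_zero.mp h).symm
    have hre : μ = (μ.re : ℂ) := (Complex.conj_eq_iff_re.mp h').symm
    set m := μ.re with hm
    have hreal : m ^ 2 - l * m + qr = 0 := by
      have : ((m : ℂ)) ^ 2 - (l : ℂ) * (m : ℂ) + (qr : ℂ) = 0 := by rw [← hre]; exact hμ
      exact_mod_cast this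
    have hmle : m ^ 2 ≤ qr := by nlinarith [sq_nonneg (2 * m - l)]
    rw [hre, Complex.norm_real, Real.norm_eq_abs, ← Real.sqrt_sq_eq_abs]
    exact Real.sqrt_le_sqrt (by nlinarith)
  · have h' : μ * (starRingEnd ℂ) μ = (qr : ℂ) := by linear_combination μ * h - hμ
    have hn : Complex.normSq μ = qr := by
      have h2 := Complex.mul_conj μ
      rw [h2] at h'
      exact_mod_cast h'
    rw [Complex.norm_def, hn]

private lemma symm_eig_real {n : Type*} [Fintype n] (A : Matrix n n ℝ) (hA : Aᵀ = A)
    (g : n → ℂ) (hg : g ≠ 0) (l : ℂ)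
    (h : ∀ i, ∑ j, (A i j : ℂ) * g j = l * g i) : l.im = 0 := by
  classical
  have hc : (∑ i, Complex.normSq (g i)) ≠ 0 := by
    intro h0
    apply hg
    funext i
    have := (Finset.sum_eq_zero_iff_of_nonneg (fun i _ => Complex.normSq_nonneg (g i))).mp h0 i
      (Finset.mem_univ i)
    exact Complex.normSq_eq_zero.mp this
  set d : ℂ := ∑ i, ∑ j, (A i j : ℂ) * ((starRingEnd ℂ) (g i) * g j) with hd
  have hd1 : d = l * ((∑ i, Complex.normSq (g i) : ℝ) : ℂ) := by
    calc d = ∑ i, (starRingEnd ℂ) (g i) * ∑ j, (A i j : ℂ) * g j := by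
            refine Finset.sum_congr rfl fun i _ => ?_
            rw [Finset.mul_sum]
            exact Finset.sum_congr rfl fun j _ => by ring
      _ = ∑ i, (starRingEnd ℂ) (g i) * (l * g i) := by
            refine Finset.sum_congr rfl fun i _ => ?_
            rw [h i]
      _ = l * ((∑ i, Complex.normSq (g i) : ℝ) : ℂ) := by
            push_cast
            rw [Finset.mul_sum]
            refine Finset.sum_congr rfl fun i _ => ?_
            rw [Complex.normSq_eq_conj_mul_self]
            ring
  have hd2 : (starRingEnd ℂ) d = d := by
    rw [hd]
    simp only [map_sum, _root_.map_mul, Complex.conj_ofReal, Complex.conj_conj]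
    rw [Finset.sum_comm]
    refine Finset.sum_congr rfl fun j _ => Finset.sum_congr rfl fun i _ => ?_
    have e : A i j = A j i := by rw [← Matrix.transpose_apply A j i, hA]
    rw [e]
    ring
  rw [hd1, _root_.map_mul, Complex.conj_ofReal] at hd2
  have hc' : ((∑ i, Complex.normSq (g i) : ℝ) : ℂ) ≠ 0 := by exact_mod_cast hc
  have : (starRingEnd ℂ) l = l := mul_right_cancel₀ hc' hd2
  exact Complex.conj_eq_iff_im.mp this

private lemma sum_src {V : Type*} [Fintype V] [DecidableEq V] (G : SimpleGraph V)
    [DecidableRel G.Adj] (u : V) (F : V → ℂ) :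
    ∑ f : {e : V × V // G.Adj e.1 e.2}, (if f.1.1 = u then F f.1.2 else 0)
      = ∑ v ∈ G.neighborFinset u, F v := by
  classical
  rw [← Finset.sum_filter]
  refine Finset.sum_bij' (fun f _ => f.1.2) (fun v hv => ⟨(u, v), by simpa using hv⟩)
    ?_ ?_ ?_ ?_ ?_
  · intro f hf
    simp only [Finset.mem_filter, Finset.mem_univ, true_and] at hf
    rw [SimpleGraph.mem_neighborFinset]
    exact hf ▸ f.2
  · intro v hv
    simp
  · intro f hf
    simp only [Finset.mem_filter, Finset.mem_univ, true_and] at hf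
    exact Subtype.ext (Prod.ext hf.symm rfl)
  · intro v hv
    rfl
  · intro f hf
    rfl

/-- **Hashimoto**: a finite connected `(q+1)`-regular graph `X` is Ramanujan (every
adjacency eigenvalue `λ` has `|λ| = q+1` or `|λ| ≤ 2√q`) if and only if its
non-backtracking digraph is a Ramanujan digraph (every eigenvalue `μ` of the
non-backtracking matrix `B` has `|μ| = q` or `|μ| ≤ √q`). -/
theorem hashimoto_ramanujan
    {V : Type*} [Fintype V] [DecidableEq V]
    (G : SimpleGraph V) [DecidableRel G.Adj]
    (q : ℕ) (hq : 2 ≤ q)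
    (hconn : G.Connected) (hreg : G.IsRegularOfDegree (q + 1))
    (B : Matrix {e : V × V // G.Adj e.1 e.2} {e : V × V // G.Adj e.1 e.2} ℂ)
    (hB : ∀ e f : {e : V × V // G.Adj e.1 e.2},
      B e f = if e.1.2 = f.1.1 ∧ f.1.2 ≠ e.1.1 then 1 else 0) :
    (∀ lam : ℝ, (∃ x : V → ℝ, x ≠ 0 ∧ G.adjMatrix ℝ *ᵥ x = lam • x) →
        |lam| = (q : ℝ) + 1 ∨ |lam| ≤ 2 * Real.sqrt (q : ℝ)) ↔
    (∀ mu : ℂ, (∃ y : {e : V × V // G.Adj e.1 e.2} → ℂ, y ≠ 0 ∧ B *ᵥ y = mu • y) →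
        ‖mu‖ = (q : ℝ) ∨ ‖mu‖ ≤ Real.sqrt (q : ℝ)) := by
  classical
  have hq2 : (2 : ℝ) ≤ q := by exact_mod_cast hq
  have hq0 : (0 : ℝ) < q := by linarith
  have hq1 : (1 : ℝ) ≤ Real.sqrt q := Real.one_le_sqrt.mpr (by linarith)
  have hdeg : ∀ v : V, (G.neighborFinset v).card = q + 1 := fun v => hreg v
  have hBv : ∀ (y : {e : V × V // G.Adj e.1 e.2} → ℂ) (e : {e : V × V // G.Adj e.1 e.2}),
      (B *ᵥ y) e = (∑ f : {e : V × V // G.Adj e.1 e.2}, if f.1.1 = e.1.2 then y f else 0)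
        - y ⟨(e.1.2, e.1.1), e.2.symm⟩ := by
    intro y e
    have hterm : ∀ f : {e : V × V // G.Adj e.1 e.2}, B e f * y f =
        (if f.1.1 = e.1.2 then y f else 0)
          - (if f = ⟨(e.1.2, e.1.1), e.2.symm⟩ then y f else 0) := by
      intro f
      rw [hB]
      by_cases h1 : f.1.1 = e.1.2
      · by_cases h2 : f = ⟨(e.1.2, e.1.1), e.2.symm⟩
        · subst h2
          simp
        · have h3 : f.1.2 ≠ e.1.1 := fun hc => h2 (Subtype.ext (Prod.ext h1 hc))
          rw [if_pos ⟨h1.symm, h3⟩, if_pos h1, if_neg h2, one_mul, sub_zero]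
      · have h2 : f ≠ ⟨(e.1.2, e.1.1), e.2.symm⟩ := by
          intro hc
          rw [hc] at h1
          exact h1 rfl
        have h1' : ¬(e.1.2 = f.1.1 ∧ f.1.2 ≠ e.1.1) := fun hc => h1 hc.1.symm
        rw [if_neg h1', if_neg h1, if_neg h2, zero_mul, sub_zero]
    calc (B *ᵥ y) e = ∑ f, B e f * y f := rfl
      _ = ∑ f : {e : V × V // G.Adj e.1 e.2}, ((if f.1.1 = e.1.2 then y f else 0)
            - (if f = ⟨(e.1.2, e.1.1), e.2.symm⟩ then y f else 0)) :=
          Finset.sum_congr rfl fun f _ => hterm f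
      _ = _ := by
          rw [Finset.sum_sub_distrib]
          congr 1
          simp [Finset.sum_ite_eq']
  constructor
  · -- graph Ramanujan → digraph Ramanujan
    intro hAR mu hmu
    obtain ⟨y, hy0, hyB⟩ := hmu
    by_cases hle : ‖mu‖ ≤ Real.sqrt q
    · exact Or.inr hle
    push_neg at hle
    set g : V → ℂ := fun v => ∑ f : {e : V × V // G.Adj e.1 e.2}, if f.1.1 = v then y f else 0
      with hgdef
    have hgu : ∀ v, g v = ∑ f : {e : V × V // G.Adj e.1 e.2}, if f.1.1 = v then y f else 0 :=
      fun v => rfl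
    have hstar : ∀ e : {e : V × V // G.Adj e.1 e.2},
        mu * y e = g e.1.2 - y ⟨(e.1.2, e.1.1), e.2.symm⟩ := by
      intro e
      have h1 := congrFun hyB e
      rw [hBv y e] at h1
      rw [← hgu] at h1
      rw [h1]
      simp
    have hstar2 : ∀ e : {e : V × V // G.Adj e.1 e.2},
        mu * y ⟨(e.1.2, e.1.1), e.2.symm⟩ = g e.1.1 - y e :=
      fun e => hstar ⟨(e.1.2, e.1.1), e.2.symm⟩
    have hsq : ∀ e, (mu ^ 2 - 1) * y e = mu * g e.1.2 - g e.1.1 := by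
      intro e
      linear_combination mu * hstar e - hstar2 e
    by_cases hgz : g = 0
    · exfalso
      obtain ⟨e, he⟩ : ∃ e, y e ≠ 0 := by
        by_contra hno
        push_neg at hno
        exact hy0 (funext hno)
      have h1 : (mu ^ 2 - 1) * y e = 0 := by rw [hsq e, hgz]; simp
      have h2 : mu ^ 2 = 1 := by
        rcases mul_eq_zero.mp h1 with h | h
        · linear_combination h
        · exact absurd h he
      have h3 : ‖mu‖ ^ 2 = 1 := by
        rw [← norm_pow, h2]
        simp
      nlinarith [norm_nonneg mu]
    · have hmu0 : mu ≠ 0 := by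
        intro h
        rw [h, norm_zero] at hle
        linarith [Real.sqrt_nonneg (q : ℝ)]
      have heig : ∀ u : V, mu * (∑ v ∈ G.neighborFinset u, g v) = (mu ^ 2 + q) * g u := by
        intro u
        have hsum : ∑ f : {e : V × V // G.Adj e.1 e.2},
              (if f.1.1 = u then (mu ^ 2 - 1) * y f else 0)
            = ∑ f : {e : V × V // G.Adj e.1 e.2},
              (if f.1.1 = u then mu * g f.1.2 - g f.1.1 else 0) :=
          Finset.sum_congr rfl fun f _ => by
            by_cases h : f.1.1 = u
            · rw [if_pos h, if_pos h, hsq f]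
            · rw [if_neg h, if_neg h]
        have hL : ∑ f : {e : V × V // G.Adj e.1 e.2},
            (if f.1.1 = u then (mu ^ 2 - 1) * y f else 0) = (mu ^ 2 - 1) * g u := by
          rw [hgu u, Finset.mul_sum]
          exact Finset.sum_congr rfl fun f _ => by rw [mul_ite, mul_zero]
        have hR2 : ∑ f : {e : V × V // G.Adj e.1 e.2},
            (if f.1.1 = u then g f.1.1 else 0) = ((q : ℂ) + 1) * g u := by
          have h1 : ∀ f : {e : V × V // G.Adj e.1 e.2},
              (if f.1.1 = u then g f.1.1 else 0) = (if f.1.1 = u then g u else 0) := fun f => by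
            by_cases h : f.1.1 = u
            · rw [if_pos h, if_pos h, h]
            · rw [if_neg h, if_neg h]
          rw [Finset.sum_congr rfl fun f _ => h1 f, sum_src G u (fun _ => g u),
            Finset.sum_const, hdeg u, nsmul_eq_mul]
          push_cast
          ring
        have hsplit : ∑ f : {e : V × V // G.Adj e.1 e.2},
            (if f.1.1 = u then mu * g f.1.2 - g f.1.1 else 0)
            = mu * (∑ v ∈ G.neighborFinset u, g v) - ((q : ℂ) + 1) * g u := by
          have h1 : ∀ f : {e : V × V // G.Adj e.1 e.2},
              (if f.1.1 = u then mu * g f.1.2 - g f.1.1 else 0)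
              = mu * (if f.1.1 = u then g f.1.2 else 0) - (if f.1.1 = u then g f.1.1 else 0) :=
            fun f => by
              by_cases h : f.1.1 = u
              · rw [if_pos h, if_pos h, if_pos h]
              · rw [if_neg h, if_neg h, if_neg h, mul_zero, sub_zero]
          rw [Finset.sum_congr rfl fun f _ => h1 f, Finset.sum_sub_distrib, ← Finset.mul_sum,
            sum_src G u g, hR2]
        have hfin : (mu ^ 2 - 1) * g u
            = mu * (∑ v ∈ G.neighborFinset u, g v) - ((q : ℂ) + 1) * g u := by
          rw [← hL, hsum, hsplit]
        linear_combination -hfin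
      set l : ℂ := (mu ^ 2 + (q : ℂ)) / mu with hldef
      have hlmu : l * mu = mu ^ 2 + (q : ℂ) := by
        rw [hldef]
        field_simp
      have heig' : ∀ u : V, ∑ j, ((G.adjMatrix ℝ) u j : ℂ) * g j = l * g u := by
        intro u
        have h1 : ∑ j, ((G.adjMatrix ℝ) u j : ℂ) * g j = ∑ v ∈ G.neighborFinset u, g v := by
          rw [SimpleGraph.neighborFinset_eq_filter, Finset.sum_filter]
          refine Finset.sum_congr rfl fun v _ => ?_
          by_cases h : G.Adj u v <;> simp [h]
        rw [h1]
        have h2 := heig u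
        have h3 : mu * (l * g u) = mu * (∑ v ∈ G.neighborFinset u, g v) := by
          rw [h2]
          linear_combination g u * hlmu
        exact (mul_left_cancel₀ hmu0 h3).symm
      have him : l.im = 0 :=
        symm_eig_real (G.adjMatrix ℝ) (by simp) g hgz l heig'
      have hlre : ((l.re : ℝ) : ℂ) = l := Complex.ext (by simp) (by simp [him])
      set lr := l.re with hlrdef
      set gr : V → ℝ := fun v => (g v).re with hgr
      set gi : V → ℝ := fun v => (g v).im with hgi
      have heigR : G.adjMatrix ℝ *ᵥ gr = lr • gr := by
        funext u
        have h1 := heig' u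
        rw [← hlre] at h1
        have h2 := congrArg Complex.re h1
        simp only [Complex.re_sum, Complex.mul_re, Complex.ofReal_re, Complex.ofReal_im,
          zero_mul, sub_zero] at h2
        show ∑ j, (G.adjMatrix ℝ) u j * gr j = lr * gr u
        exact h2
      have heigI : G.adjMatrix ℝ *ᵥ gi = lr • gi := by
        funext u
        have h1 := heig' u
        rw [← hlre] at h1
        have h2 := congrArg Complex.im h1
        simp only [Complex.im_sum, Complex.mul_im, Complex.ofReal_re, Complex.ofReal_im,
          zero_mul, add_zero] at h2
        show ∑ j, (G.adjMatrix ℝ) u j * gi j = lr * gi u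
        exact h2
      have hxor : gr ≠ 0 ∨ gi ≠ 0 := by
        by_contra hc
        push_neg at hc
        apply hgz
        funext v
        have h1 : (g v).re = 0 := by
          have := congrFun hc.1 v
          exact this
        have h2 : (g v).im = 0 := by
          have := congrFun hc.2 v
          exact this
        exact Complex.ext (by simpa using h1) (by simpa using h2)
      have hlr2 : |lr| = (q : ℝ) + 1 ∨ |lr| ≤ 2 * Real.sqrt q := by
        rcases hxor with h | h
        · exact hAR lr ⟨gr, h, heigR⟩
        · exact hAR lr ⟨gi, h, heigI⟩
      have hquadC : mu ^ 2 - (lr : ℂ) * mu + (q : ℂ) = 0 := by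
        rw [hlre]
        linear_combination -hlmu
      rcases hlr2 with h | h
      · rcases (abs_eq (by positivity : (0 : ℝ) ≤ (q : ℝ) + 1)).mp h with h' | h'
        · have hlr' : (lr : ℂ) = (q : ℂ) + 1 := by rw [h']; push_cast; ring
          have hfac : (mu - 1) * (mu - (q : ℂ)) = 0 := by
            linear_combination hquadC + mu * hlr'
          rcases mul_eq_zero.mp hfac with h2 | h2
          · exfalso
            have hmu1 : mu = 1 := by linear_combination h2
            rw [hmu1] at hle
            simp at hle
            linarith
          · left
            have hmuq : mu = (q : ℂ) := by linear_combination h2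
            rw [hmuq]
            simp
        · have hlr' : (lr : ℂ) = -((q : ℂ) + 1) := by rw [h']; push_cast; ring
          have hfac : (mu + 1) * (mu + (q : ℂ)) = 0 := by
            linear_combination hquadC + mu * hlr'
          rcases mul_eq_zero.mp hfac with h2 | h2
          · exfalso
            have hmu1 : mu = -1 := by linear_combination h2
            rw [hmu1] at hle
            simp at hle
            linarith
          · left
            have hmuq : mu = -(q : ℂ) := by linear_combination h2
            rw [hmuq]
            simp
      · exfalso
        have := quad_root_abs_le hq0 h (by exact_mod_cast hquadC)
        linarith
  · -- digraph Ramanujan → graph Ramanujan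
    intro hBR lam hlam
    obtain ⟨x, hx0, hxA⟩ := hlam
    by_cases hle : |lam| ≤ 2 * Real.sqrt q
    · exact Or.inr hle
    push_neg at hle
    left
    have hxv : ∀ v, ∑ w ∈ G.neighborFinset v, x w = lam * x v := by
      intro v
      have h1 := congrFun hxA v
      rw [SimpleGraph.adjMatrix_mulVec_apply] at h1
      simpa using h1
    have key : ∃ m : ℝ, m ^ 2 - lam * m + q = 0 ∧ Real.sqrt q < |m| := by
      have hD0 : 0 ≤ lam ^ 2 - 4 * q := by
        nlinarith [Real.sq_sqrt hq0.le, Real.sqrt_nonneg (q : ℝ), abs_nonneg lam, sq_abs lam]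
      have hDsq : Real.sqrt (lam ^ 2 - 4 * q) ^ 2 = lam ^ 2 - 4 * q := Real.sq_sqrt hD0
      set s : ℝ := if 0 ≤ lam then 1 else -1 with hs
      have hs2 : s ^ 2 = 1 := by rw [hs]; split_ifs <;> norm_num
      have hsl : s * lam = |lam| := by
        rw [hs]
        split_ifs with h
        · rw [abs_of_nonneg h]; ring
        · rw [abs_of_neg (lt_of_not_ge h)]; ring
      have hsabs : |s| = 1 := by rw [hs]; split_ifs <;> norm_num
      refine ⟨(lam + s * Real.sqrt (lam ^ 2 - 4 * q)) / 2, ?_, ?_⟩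
      · linear_combination (s ^ 2 / 4) * hDsq + ((lam ^ 2 - 4 * q) / 4) * hs2
      · have hsm : s * ((lam + s * Real.sqrt (lam ^ 2 - 4 * q)) / 2)
            = (|lam| + Real.sqrt (lam ^ 2 - 4 * q)) / 2 := by
          linear_combination hsl / 2 + (Real.sqrt (lam ^ 2 - 4 * q) / 2) * hs2
        have h1 : Real.sqrt q < s * ((lam + s * Real.sqrt (lam ^ 2 - 4 * q)) / 2) := by
          rw [hsm]
          have := Real.sqrt_nonneg (lam ^ 2 - 4 * q)
          linarith
        calc Real.sqrt q < s * ((lam + s * Real.sqrt (lam ^ 2 - 4 * q)) / 2) := h1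
          _ ≤ |s * ((lam + s * Real.sqrt (lam ^ 2 - 4 * q)) / 2)| := le_abs_self _
          _ = |(lam + s * Real.sqrt (lam ^ 2 - 4 * q)) / 2| := by rw [abs_mul, hsabs, one_mul]
    obtain ⟨m, hquad, hm⟩ := key
    have hquadC : (m : ℂ) ^ 2 - (lam : ℂ) * (m : ℂ) + (q : ℂ) = 0 := by exact_mod_cast hquad
    set y : {e : V × V // G.Adj e.1 e.2} → ℂ :=
      fun e => (x e.1.1 : ℂ) - (m : ℂ) * (x e.1.2 : ℂ) with hy
    have hyB : B *ᵥ y = (m : ℂ) • y := by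
      funext e
      rw [hBv y e]
      have h1 : ∑ f : {e : V × V // G.Adj e.1 e.2}, (if f.1.1 = e.1.2 then y f else 0)
          = ∑ w ∈ G.neighborFinset e.1.2, ((x e.1.2 : ℂ) - (m : ℂ) * (x w : ℂ)) := by
        rw [← sum_src G e.1.2 (fun w => (x e.1.2 : ℂ) - (m : ℂ) * (x w : ℂ))]
        refine Finset.sum_congr rfl fun f _ => ?_
        by_cases h : f.1.1 = e.1.2
        · rw [if_pos h, if_pos h]
          simp only [hy, h]
        · rw [if_neg h, if_neg h]
      have hsum : ∑ w ∈ G.neighborFinset e.1.2, ((x w : ℝ) : ℂ) = ((lam * x e.1.2 : ℝ) : ℂ) := by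
        rw [← hxv e.1.2]
        push_cast
        rfl
      have h2 : ∑ w ∈ G.neighborFinset e.1.2, ((x e.1.2 : ℂ) - (m : ℂ) * (x w : ℂ))
          = ((q : ℂ) + 1) * (x e.1.2 : ℂ) - (m : ℂ) * ((lam : ℂ) * (x e.1.2 : ℂ)) := by
        rw [Finset.sum_sub_distrib, Finset.sum_const, hdeg, nsmul_eq_mul, ← Finset.mul_sum, hsum]
        push_cast
        ring
      rw [h1, h2]
      show _ = (m : ℂ) * y e
      simp only [hy]
      linear_combination (x e.1.2 : ℂ) * hquadC
    have hy0 : y ≠ 0 := by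
      obtain ⟨u, hu⟩ : ∃ u, x u ≠ 0 := by
        by_contra hno
        push_neg at hno
        exact hx0 (funext hno)
      have hcard : 0 < (G.neighborFinset u).card := by rw [hdeg]; omega
      obtain ⟨v, hv⟩ := Finset.card_pos.mp hcard
      rw [SimpleGraph.mem_neighborFinset] at hv
      intro h0
      have h1 : (x u : ℂ) - (m : ℂ) * (x v : ℂ) = 0 := congrFun h0 ⟨(u, v), hv⟩
      have h2 : (x v : ℂ) - (m : ℂ) * (x u : ℂ) = 0 := congrFun h0 ⟨(v, u), hv.symm⟩
      have h3 : ((m : ℂ) ^ 2 - 1) * (x u : ℂ) = 0 := by linear_combination -h1 - (m : ℂ) * h2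
      have hXu : (x u : ℂ) ≠ 0 := Complex.ofReal_ne_zero.mpr hu
      have h4 : (m : ℂ) ^ 2 = 1 := by
        rcases mul_eq_zero.mp h3 with h | h
        · linear_combination h
        · exact absurd h hXu
      have h5 : m ^ 2 = 1 := by exact_mod_cast h4
      have h6 : (m - 1) * (m + 1) = 0 := by linear_combination h5
      rcases mul_eq_zero.mp h6 with h7 | h7
      · have : m = 1 := by linarith
        rw [this] at hm
        simp at hm
        linarith
      · have : m = -1 := by linarith
        rw [this] at hm
        simp at hm
        linarith
    rcases hBR (m : ℂ) ⟨y, hy0, hyB⟩ with h | h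
    · rw [Complex.norm_real, Real.norm_eq_abs] at h
      rcases (abs_eq hq0.le).mp h with h' | h'
      · have hfac : (lam - ((q : ℝ) + 1)) * q = 0 := by
          rw [h'] at hquad
          linear_combination -hquad
        have hl : lam = (q : ℝ) + 1 := by
          rcases mul_eq_zero.mp hfac with h2 | h2
          · linarith [sub_eq_zero.mp h2]
          · exact absurd h2 (ne_of_gt hq0)
        rw [hl, abs_of_pos (by linarith)]
      · have hfac : (lam + ((q : ℝ) + 1)) * q = 0 := by
          rw [h'] at hquad
          linear_combination hquad
        have hl : lam = -((q : ℝ) + 1) := by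
          rcases mul_eq_zero.mp hfac with h2 | h2
          · linarith
          · exact absurd h2 (ne_of_gt hq0)
        rw [hl, abs_neg, abs_of_pos (by linarith)]
    · exfalso
      rw [Complex.norm_real, Real.norm_eq_abs] at h
      linarith
end

section
/- (Parzanchevski–Sarnak covering bound) Let G be a compact topological group equipped with a metric d inducing its topology which is invariant under left and right translations, and let μ be the normalized Haar probability measure on G. Let S be a finite nonempty subset of G, let T_S be the bounded operator on L²(G, μ) defined by (T_S f)(g) = Σ_{s ∈ S} f(sg), and let λ_S be the operator norm of the restriction of T_S to the subspace {f ∈ L²(G, μ) : ∫_G f dμ = 0}. Then for every ε > 0, the ε-neighborhood of S satisfies μ(∪_{s ∈ S} B_ε(s)) ≥ 1 − λ_S² / (|S|² · μ(B_ε(1))), where B_ε(x) is the open ball of radius ε around x and 1 is the identity of G. -/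
open MeasureTheory

section Aux

variable {G : Type*} [Group G] [MetricSpace G] [CompactSpace G] [IsTopologicalGroup G]
  [MeasurableSpace G] [BorelSpace G]
  (μ : Measure G) [μ.IsHaarMeasure] [IsProbabilityMeasure μ]

lemma covAux_rightInvariant : μ.IsMulRightInvariant := by
  constructor
  intro g
  have hmeas : Measurable (· * g : G → G) := measurable_mul_const g
  haveI h1 : (Measure.map (· * g) μ).IsMulLeftInvariant :=
    MeasureTheory.isMulLeftInvariant_map_mul_right (μ := μ) g
  haveI h2 : IsProbabilityMeasure (Measure.map (· * g) μ) :=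
    Measure.isProbabilityMeasure_map hmeas.aemeasurable
  haveI h3 : (Measure.map (· * g) μ).IsOpenPosMeasure := by
    constructor
    intro U hU hUne
    rw [Measure.map_apply hmeas hU.measurableSet]
    refine (hU.preimage (continuous_mul_right g)).measure_ne_zero μ ?_
    obtain ⟨x, hx⟩ := hUne
    exact ⟨x * g⁻¹, by simpa using hx⟩
  haveI h4 : (Measure.map (· * g) μ).IsHaarMeasure := ⟨⟩
  exact Measure.isHaarMeasure_eq_of_isProbabilityMeasure (Measure.map (· * g) μ) μ

lemma covAux_inv_eq (A : Set G) : μ A⁻¹ = μ A := by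
  haveI := covAux_rightInvariant μ
  haveI : IsProbabilityMeasure μ.inv := ⟨by rw [Measure.inv_apply]; simp⟩
  haveI : μ.inv.IsHaarMeasure := ⟨⟩
  have h : μ.inv = μ := Measure.isHaarMeasure_eq_of_isProbabilityMeasure μ.inv μ
  rw [← Measure.inv_apply, h]

set_option linter.unusedSectionVars false in
lemma covAux_norm_sq (f : Lp ℂ 2 μ) :
    ‖f‖ ^ 2 = ∫ a, ‖(f : G → ℂ) a‖ ^ 2 ∂μ := by
  have h2 : ‖f‖ ^ 2 = RCLike.re (inner ℂ f f : ℂ) := (inner_self_eq_norm_sq (𝕜 := ℂ) f).symm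
  rw [h2, L2.inner_def, ← integral_re (L2.integrable_inner f f)]
  exact integral_congr_ae (Filter.Eventually.of_forall fun a =>
    inner_self_eq_norm_sq (𝕜 := ℂ) _)

end Aux

/-- **Parzanchevski–Sarnak covering bound**: let `G` be a compact metrizable topological
group with a bi-invariant metric, `μ` the normalized Haar measure, `S` a finite nonempty
subset of `G`, `T` the operator `(T f)(g) = ∑_{s ∈ S} f(sg)` on `L²(G,μ)`, and `λ_S` the
operator norm of the restriction of `T` to the mean-zero subspace. Then the
`ε`-neighborhood of `S` has measure at least `1 − λ_S²/(|S|²·μ(B_ε(1)))`. -/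
theorem covering_bound
    {G : Type*} [Group G] [MetricSpace G] [CompactSpace G] [IsTopologicalGroup G]
    [MeasurableSpace G] [BorelSpace G]
    (hinvL : ∀ a x y : G, dist (a * x) (a * y) = dist x y)
    (hinvR : ∀ a x y : G, dist (x * a) (y * a) = dist x y)
    (μ : Measure G) [μ.IsHaarMeasure] [IsProbabilityMeasure μ]
    (S : Finset G) (hS : S.Nonempty)
    (T : Lp ℂ 2 μ →L[ℂ] Lp ℂ 2 μ)
    (hT : ∀ f : Lp ℂ 2 μ, (T f : G → ℂ) =ᵐ[μ] fun g => ∑ s ∈ S, f (s * g))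
    (lamS : ℝ)
    (hlamS : lamS = sSup {r : ℝ | ∃ f : Lp ℂ 2 μ,
      (∫ g, (f : G → ℂ) g ∂μ) = 0 ∧ ‖f‖ ≤ 1 ∧ r = ‖T f‖})
    (ε : ℝ) (hε : 0 < ε) :
    1 - lamS ^ 2 / ((S.card : ℝ) ^ 2 * (μ (Metric.ball (1 : G) ε)).toReal)
      ≤ (μ (⋃ s ∈ S, Metric.ball (s : G) ε)).toReal := by
  -- basic setup
  set B : Set G := Metric.ball (1 : G) ε with hBdef
  have hBmeas : MeasurableSet B := Metric.isOpen_ball.measurableSet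
  have hBpos : 0 < μ B := Metric.isOpen_ball.measure_pos μ ⟨1, Metric.mem_ball_self hε⟩
  have hBfin : μ B ≠ ⊤ := measure_ne_top μ B
  set β : ℝ := (μ B).toReal with hβdef
  have hβpos : 0 < β := ENNReal.toReal_pos hBpos.ne' hBfin
  have hβle : β ≤ 1 := by
    have h1 : μ B ≤ 1 := prob_le_one
    have := ENNReal.toReal_mono ENNReal.one_ne_top h1
    simpa using this
  -- the test function
  set f0 : G → ℂ := fun g => B.indicator (fun _ => (1:ℂ)) g - (β:ℂ) with hf0def
  have hmem : MemLp f0 2 μ :=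
    (memLp_indicator_const 2 hBmeas (1:ℂ) (Or.inr hBfin)).sub (memLp_const (β:ℂ))
  set f : Lp ℂ 2 μ := hmem.toLp f0 with hfdef
  have hfcoe : (f : G → ℂ) =ᵐ[μ] f0 := hmem.coeFn_toLp
  have hIndInt : Integrable (fun g => B.indicator (fun _ => (1:ℂ)) g) μ :=
    (integrable_indicator_iff hBmeas).2 (integrableOn_const hBfin)
  have hint_f0 : ∫ g, f0 g ∂μ = 0 := by
    rw [hf0def]
    rw [integral_sub hIndInt (integrable_const _)]
    rw [integral_indicator_const (1:ℂ) hBmeas, integral_const]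
    simp [hβdef, Complex.real_smul, measureReal_def]
  have hfint : ∫ g, (f : G → ℂ) g ∂μ = 0 := by
    rw [integral_congr_ae hfcoe]; exact hint_f0
  -- pointwise norm squared of f0
  have hf0norm : ∀ g, ‖f0 g‖ ^ 2
      = B.indicator (fun _ => (1-β)^2 - β^2) g + β^2 := by
    intro g
    by_cases hg : g ∈ B
    · rw [hf0def]
      simp only [Set.indicator_of_mem hg]
      have : (1:ℂ) - (β:ℂ) = ((1 - β : ℝ) : ℂ) := by push_cast; ring
      rw [this, Complex.norm_real, Real.norm_eq_abs, sq_abs]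
      ring
    · rw [hf0def]
      simp only [Set.indicator_of_notMem hg]
      have : (0:ℂ) - (β:ℂ) = ((-β : ℝ) : ℂ) := by push_cast; ring
      rw [this, Complex.norm_real, Real.norm_eq_abs, sq_abs]
      ring
  have hfnormsq : ‖f‖ ^ 2 ≤ β := by
    rw [covAux_norm_sq μ f]
    have h1 : ∫ a, ‖(f : G→ℂ) a‖^2 ∂μ = ∫ a, ‖f0 a‖^2 ∂μ :=
      integral_congr_ae (hfcoe.mono fun a ha => by simp only [ha])
    have h2 : ∫ a, ‖f0 a‖^2 ∂μ = β * ((1-β)^2 - β^2) + β^2 := by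
      simp_rw [hf0norm]
      rw [integral_add ((integrable_indicator_iff hBmeas).2
          (integrableOn_const hBfin)) (integrable_const _)]
      rw [integral_indicator_const _ hBmeas, integral_const]
      simp [hβdef, smul_eq_mul, measureReal_def]
    rw [h1, h2]; nlinarith
  -- lamS facts
  have hbdd : BddAbove {r : ℝ | ∃ f : Lp ℂ 2 μ,
      (∫ g, (f : G → ℂ) g ∂μ) = 0 ∧ ‖f‖ ≤ 1 ∧ r = ‖T f‖} := by
    refine ⟨‖T‖, ?_⟩
    rintro r ⟨u, -, hu1, rfl⟩
    calc ‖T u‖ ≤ ‖T‖ * ‖u‖ := T.le_opNorm u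
      _ ≤ ‖T‖ * 1 := mul_le_mul_of_nonneg_left hu1 (norm_nonneg T)
      _ = ‖T‖ := mul_one _
  have hzero : (0:ℝ) ∈ {r : ℝ | ∃ f : Lp ℂ 2 μ,
      (∫ g, (f : G → ℂ) g ∂μ) = 0 ∧ ‖f‖ ≤ 1 ∧ r = ‖T f‖} := by
    refine ⟨0, ?_, by simp, by simp⟩
    rw [integral_congr_ae (Lp.coeFn_zero ℂ 2 μ)]; simp
  have hlam0 : (0:ℝ) ≤ lamS := hlamS ▸ le_csSup hbdd hzero
  have hTle : ‖T f‖ ≤ lamS * ‖f‖ := by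
    by_cases hf : f = 0
    · simp [hf]
    · have hfn : (0:ℝ) < ‖f‖ := norm_pos_iff.2 hf
      set c : ℂ := ((‖f‖⁻¹ : ℝ) : ℂ) with hcdef
      have hcnorm : ‖c‖ = ‖f‖⁻¹ := by
        rw [hcdef, Complex.norm_real, Real.norm_eq_abs, abs_of_nonneg (inv_nonneg.2 hfn.le)]
      have hmemS : ‖T (c • f)‖ ∈ {r : ℝ | ∃ f : Lp ℂ 2 μ,
          (∫ g, (f : G → ℂ) g ∂μ) = 0 ∧ ‖f‖ ≤ 1 ∧ r = ‖T f‖} := by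
        refine ⟨c • f, ?_, ?_, rfl⟩
        · rw [integral_congr_ae (Lp.coeFn_smul c f)]
          simp only [Pi.smul_apply]
          rw [integral_smul, hfint, smul_zero]
        · rw [norm_smul, hcnorm, inv_mul_cancel₀ hfn.ne']
      have hle : ‖T (c • f)‖ ≤ lamS := hlamS ▸ le_csSup hbdd hmemS
      rw [show T (c • f) = c • T f from T.map_smul c f, norm_smul, hcnorm] at hle
      rw [inv_mul_le_iff₀ hfn] at hle
      linarith [hle]
  -- the neighborhoods
  set N' : Set G := ⋃ s ∈ S, Metric.ball (s⁻¹ : G) ε with hN'def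
  have hN'open : IsOpen N' := isOpen_biUnion fun s _ => Metric.isOpen_ball
  set N : Set G := ⋃ s ∈ S, Metric.ball (s : G) ε with hNdef
  have hdistinv : ∀ x s : G, dist x⁻¹ s⁻¹ = dist x s := by
    intro x s
    have h1 : dist (x⁻¹ * s) (s⁻¹ * s) = dist x⁻¹ s⁻¹ := hinvR s x⁻¹ s⁻¹
    have h2 : dist (x * (x⁻¹ * s)) (x * 1) = dist (x⁻¹ * s) 1 := hinvL x (x⁻¹ * s) 1
    rw [inv_mul_cancel] at h1
    rw [mul_inv_cancel_left, mul_one] at h2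
    rw [← h1, ← h2, dist_comm]
  have hNN' : N = N'⁻¹ := by
    ext x
    simp only [hNdef, hN'def, Set.mem_inv, Set.mem_iUnion, Metric.mem_ball]
    constructor
    · rintro ⟨s, hs, hd⟩
      exact ⟨s, hs, by rwa [hdistinv x s]⟩
    · rintro ⟨s, hs, hd⟩
      rw [hdistinv x s] at hd
      exact ⟨s, hs, hd⟩
  have hμN : μ N = μ N' := by rw [hNN']; exact covAux_inv_eq μ N'
  set m : ℝ := (μ N).toReal with hmdef
  have hmN' : (μ N').toReal = m := by rw [hmdef, hμN]
  -- off N', all translates miss B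
  have hoff : ∀ g, g ∉ N' → ∀ s ∈ S, s * g ∉ B := by
    intro g hg s hs hsb
    apply hg
    rw [hN'def]
    simp only [Set.mem_iUnion, Metric.mem_ball]
    refine ⟨s, hs, ?_⟩
    have h2 : dist (s⁻¹ * (s * g)) (s⁻¹ * 1) = dist (s * g) 1 := hinvL s⁻¹ (s * g) 1
    rw [inv_mul_cancel_left, mul_one] at h2
    rw [h2]
    exact Metric.mem_ball.1 hsb
  -- T f a.e. equals the explicit sum of translates of f0
  have hTf : (T f : G → ℂ) =ᵐ[μ] fun g => ∑ s ∈ S, f0 (s * g) := by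
    refine (hT f).trans ?_
    have H : ∀ᵐ g ∂μ, ∀ s ∈ S, (f : G → ℂ) (s * g) = f0 (s * g) := by
      rw [Filter.eventually_all_finset]
      intro s _
      have hq : Measure.QuasiMeasurePreserving (fun g : G => s * g) μ μ :=
        (measurePreserving_mul_left μ s).quasiMeasurePreserving
      exact hq.ae_eq_comp hfcoe
    filter_upwards [H] with g hg
    exact Finset.sum_congr rfl fun s hs => hg s hs
  -- lower bound for ‖T f‖²
  have hcard : (0:ℝ) < (S.card : ℝ) := by exact_mod_cast Finset.card_pos.2 hS
  have hN'meas : MeasurableSet N' := hN'open.measurableSet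
  have hcomplint : Integrable ((N'ᶜ).indicator (fun _ => (S.card:ℝ)^2 * β^2)) μ :=
    (integrable_indicator_iff hN'meas.compl).2
      (integrableOn_const (measure_ne_top μ _))
  have hsqint : Integrable (fun a => ‖(T f : G → ℂ) a‖ ^ 2) μ := by
    have h1 : Integrable (fun a => RCLike.re (inner ℂ ((T f : G → ℂ) a) ((T f : G → ℂ) a) : ℂ)) μ :=
      (L2.integrable_inner (T f) (T f)).re
    refine h1.congr (Filter.Eventually.of_forall fun a => ?_)
    exact inner_self_eq_norm_sq (𝕜 := ℂ) _
  have hlow : (S.card:ℝ)^2 * β^2 * (1 - m) ≤ ‖T f‖^2 := by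
    rw [covAux_norm_sq μ (T f)]
    have hmono : ∀ᵐ a ∂μ, (N'ᶜ).indicator (fun _ => (S.card:ℝ)^2 * β^2) a
        ≤ ‖(T f : G → ℂ) a‖ ^ 2 := by
      filter_upwards [hTf] with a ha
      by_cases hga : a ∈ N'ᶜ
      · rw [Set.indicator_of_mem hga, ha]
        have hval : ∀ s ∈ S, f0 (s * a) = -(β:ℂ) := fun s hs => by
          rw [hf0def]
          simp [Set.indicator_of_notMem (hoff a hga s hs)]
        rw [Finset.sum_congr rfl hval, Finset.sum_const, nsmul_eq_mul]
        rw [norm_mul, norm_neg, Complex.norm_natCast, Complex.norm_real,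
          Real.norm_eq_abs, abs_of_nonneg hβpos.le]
        rw [mul_pow]
      · rw [Set.indicator_of_notMem hga]
        positivity
    have hle := integral_mono_ae hcomplint hsqint hmono
    refine le_trans (le_of_eq ?_) hle
    rw [integral_indicator_const _ hN'meas.compl]
    rw [measureReal_def, prob_compl_eq_one_sub hN'meas]
    rw [ENNReal.toReal_sub_of_le prob_le_one ENNReal.one_ne_top]
    rw [hmN']
    simp [smul_eq_mul]
    ring
  -- upper bound
  have hup : ‖T f‖^2 ≤ lamS^2 * β := by
    have h1 : ‖T f‖^2 ≤ (lamS * ‖f‖)^2 := by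
      have := pow_le_pow_left₀ (norm_nonneg (T f)) hTle 2
      exact this
    nlinarith [sq_nonneg lamS, norm_nonneg f, hfnormsq]
  -- combine
  have hkey : ((S.card:ℝ)^2 * β) * (1 - m) ≤ lamS^2 := by
    have hchain : (S.card:ℝ)^2 * β^2 * (1 - m) ≤ lamS^2 * β := hlow.trans hup
    have h2 : β * (((S.card:ℝ)^2 * β) * (1 - m)) ≤ β * lamS^2 := by nlinarith
    exact le_of_mul_le_mul_left h2 hβpos
  have hpos : (0:ℝ) < (S.card:ℝ)^2 * β := by positivity
  have hfinal : 1 - m ≤ lamS^2 / ((S.card:ℝ)^2 * β) := by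
    rw [le_div_iff₀ hpos]
    calc (1 - m) * ((S.card:ℝ)^2 * β) = ((S.card:ℝ)^2 * β) * (1 - m) := by ring
      _ ≤ lamS^2 := hkey
  linarith
end

section
/- Every finite connected k-regular Ramanujan graph X (k ≥ 3) on at least two vertices satisfies h(X) ≥ (k − 2√(k−1))/2, where h(X) is the Cheeger constant of X; in particular, Ramanujan graphs are expanders. -/
open Matrix Finset

private lemma eig_k_const {V : Type*} [Fintype V] [DecidableEq V]
    (G : SimpleGraph V) [DecidableRel G.Adj] (k : ℕ)
    (hconn : G.Connected) (hreg : G.IsRegularOfDegree k)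
    (y : V → ℝ) (hy : G.adjMatrix ℝ *ᵥ y = (k : ℝ) • y) :
    ∃ t : ℝ, ∀ u, y u = t := by
  have : Nonempty V := hconn.nonempty
  obtain ⟨v, -, hv⟩ := Finset.exists_max_image (univ : Finset V) y univ_nonempty
  have key : ∀ a b : V, G.Adj a b → y a = y v → y b = y v := by
    intro a b hab ha
    by_contra hb
    have hb' : y b < y v := lt_of_le_of_ne (hv b (mem_univ b)) hb
    have hsum : ∑ w ∈ G.neighborFinset a, y w = (k : ℝ) * y a := by
      have h1 := congrFun hy a
      rwa [SimpleGraph.adjMatrix_mulVec_apply, Pi.smul_apply, smul_eq_mul] at h1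
    have hlt : ∑ w ∈ G.neighborFinset a, y w < ∑ _w ∈ G.neighborFinset a, y v :=
      Finset.sum_lt_sum (fun i _ => hv i (mem_univ i))
        ⟨b, (G.mem_neighborFinset a b).2 hab, hb'⟩
    rw [Finset.sum_const, show #(G.neighborFinset a) = k from hreg a, hsum, ha,
      nsmul_eq_mul] at hlt
    exact lt_irrefl _ hlt
  have prop : ∀ (a b : V) (p : G.Walk a b), y a = y v → y b = y v := by
    intro a b p
    induction p with
    | nil => exact fun h => h
    | cons h p ih => exact fun ha => ih (key _ _ h ha)
  refine ⟨y v, fun u => ?_⟩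
  obtain ⟨p⟩ := hconn.preconnected v u
  exact prop v u p rfl

private lemma quad_bound {V : Type*} [Fintype V] [DecidableEq V]
    (G : SimpleGraph V) [DecidableRel G.Adj] (k : ℕ)
    (hconn : G.Connected) (hreg : G.IsRegularOfDegree k)
    (lam : ℝ) (hlam : 0 ≤ lam)
    (hram : ∀ l : ℝ, (∃ x : V → ℝ, x ≠ 0 ∧ G.adjMatrix ℝ *ᵥ x = l • x) →
      |l| = (k : ℝ) ∨ |l| ≤ lam)
    (x : EuclideanSpace ℝ V) (hx : ∑ u, x u = 0) :
    ∑ u, x u * ∑ w, (G.adjMatrix ℝ) u w * x w ≤ lam * ∑ u, x u ^ 2 := by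
  have hA : (G.adjMatrix ℝ).IsHermitian := by
    apply Matrix.IsHermitian.ext
    intro i j
    simp [SimpleGraph.adjMatrix_apply, G.adj_comm i j]
  set B := hA.eigenvectorBasis with hB
  set μ := hA.eigenvalues with hμ
  set c : V → ℝ := fun j => B.repr x j with hcdef
  have hrepr : ∀ j, ∑ u, (B j) u * x u = c j := by
    intro j
    rw [hcdef]
    simp only [B.repr_apply_apply, PiLp.inner_apply, RCLike.inner_apply, starRingEnd_apply,
      star_trivial]
    exact Finset.sum_congr rfl fun _ _ => mul_comm _ _
  have hxu : ∀ u, x u = ∑ j, c j * (B j) u := by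
    intro u
    have h1 := congrArg (EuclideanSpace.proj u (𝕜 := ℝ)) (B.sum_repr x)
    rw [map_sum] at h1
    simpa [smul_eq_mul, mul_comm] using h1.symm
  have heig : ∀ j, ∀ u, ∑ w, (G.adjMatrix ℝ) u w * (B j) w = μ j * (B j) u := by
    intro j u
    have h1 := congrFun (hA.mulVec_eigenvectorBasis j) u
    simpa [Matrix.mulVec, dotProduct, smul_eq_mul] using h1
  have hAx : ∀ u, ∑ w, (G.adjMatrix ℝ) u w * x w = ∑ j, c j * (μ j * (B j) u) := by
    intro u
    calc ∑ w, (G.adjMatrix ℝ) u w * x w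
        = ∑ w, ∑ j, c j * ((G.adjMatrix ℝ) u w * (B j) w) := by
          refine Finset.sum_congr rfl fun w _ => ?_
          rw [hxu w, Finset.mul_sum]
          exact Finset.sum_congr rfl fun j _ => by ring
      _ = ∑ j, c j * (μ j * (B j) u) := by
          rw [Finset.sum_comm]
          refine Finset.sum_congr rfl fun j _ => ?_
          rw [← Finset.mul_sum, heig j u]
  have hLHS : ∑ u, x u * ∑ w, (G.adjMatrix ℝ) u w * x w = ∑ j, μ j * c j ^ 2 := by
    calc ∑ u, x u * ∑ w, (G.adjMatrix ℝ) u w * x w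
        = ∑ u, ∑ j, c j * μ j * ((B j) u * x u) := by
          refine Finset.sum_congr rfl fun u _ => ?_
          rw [hAx u, Finset.mul_sum]
          exact Finset.sum_congr rfl fun j _ => by ring
      _ = ∑ j, μ j * c j ^ 2 := by
          rw [Finset.sum_comm]
          refine Finset.sum_congr rfl fun j _ => ?_
          rw [← Finset.mul_sum, hrepr j]; ring
  have hRHS : ∑ u, x u ^ 2 = ∑ j, c j ^ 2 := by
    calc ∑ u, x u ^ 2
        = ∑ u, ∑ j, c j * ((B j) u * x u) := by
          refine Finset.sum_congr rfl fun u _ => ?_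
          rw [pow_two, hxu u, Finset.sum_mul]
          exact Finset.sum_congr rfl fun j _ => by ring
      _ = ∑ j, c j ^ 2 := by
          rw [Finset.sum_comm]
          refine Finset.sum_congr rfl fun j _ => ?_
          rw [← Finset.mul_sum, hrepr j]; ring
  rw [hLHS, hRHS, Finset.mul_sum]
  refine Finset.sum_le_sum fun j _ => ?_
  have hBne : (⇑(B j) : V → ℝ) ≠ 0 := by
    intro h0
    have h1 : ‖B j‖ = 1 := B.orthonormal.1 j
    have h2 : B j = 0 := by
      ext u
      exact congrFun h0 u
    rw [h2, norm_zero] at h1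
    norm_num at h1
  have hev : G.adjMatrix ℝ *ᵥ ⇑(B j) = μ j • ⇑(B j) := hA.mulVec_eigenvectorBasis j
  rcases hram (μ j) ⟨⇑(B j), hBne, hev⟩ with hkk | hle
  · rcases abs_eq (by positivity : (0:ℝ) ≤ (k:ℝ)) |>.1 hkk with hpos | hneg
    · obtain ⟨t, ht⟩ := eig_k_const G k hconn hreg (⇑(B j)) (by rw [hev, hpos])
      have hc0 : c j = 0 := by
        rw [← hrepr j]
        have ht' : ∀ u, (B j) u = t := ht
        calc ∑ u, (B j) u * x u = ∑ u, t * x u :=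
              Finset.sum_congr rfl fun u _ => by rw [ht' u]
          _ = t * ∑ u, x u := by rw [Finset.mul_sum]
          _ = 0 := by rw [hx, mul_zero]
      rw [hc0]
      simp
    · have : μ j ≤ lam := by
        rw [hneg]
        have : (0:ℝ) ≤ (k:ℝ) := by positivity
        linarith
      exact mul_le_mul_of_nonneg_right this (sq_nonneg _)
  · exact mul_le_mul_of_nonneg_right (abs_le.1 hle).2 (sq_nonneg _)

/-- Every finite connected `k`-regular Ramanujan graph (`k ≥ 3`) on at least two vertices
has Cheeger constant at least `(k − 2√(k−1))/2`; in particular Ramanujan graphs are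
expanders. -/
theorem ramanujan_cheeger_lower_bound
    {V : Type*} [Fintype V] [DecidableEq V]
    (G : SimpleGraph V) [DecidableRel G.Adj]
    (k : ℕ) (hk : 3 ≤ k)
    (hconn : G.Connected)
    (hreg : G.IsRegularOfDegree k)
    (hcard : 2 ≤ Fintype.card V)
    (hram : ∀ lam : ℝ, (∃ x : V → ℝ, x ≠ 0 ∧ G.adjMatrix ℝ *ᵥ x = lam • x) →
      |lam| = (k : ℝ) ∨ |lam| ≤ 2 * Real.sqrt ((k : ℝ) - 1))
    (h : ℝ)
    (hh : h = sInf {r : ℝ | ∃ Y : Finset V, Y.Nonempty ∧ 2 * Y.card ≤ Fintype.card V ∧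
      r = ((Finset.univ.filter
        (fun p : V × V => p.1 ∈ Y ∧ p.2 ∉ Y ∧ G.Adj p.1 p.2)).card : ℝ) / Y.card}) :
    ((k : ℝ) - 2 * Real.sqrt ((k : ℝ) - 1)) / 2 ≤ h := by
  set lam : ℝ := 2 * Real.sqrt ((k:ℝ) - 1) with hlamdef
  have hlam : 0 ≤ lam := by positivity
  have hklam : lam ≤ (k:ℝ) := by
    have hk3 : (3:ℝ) ≤ (k:ℝ) := by exact_mod_cast hk
    have h1 : Real.sqrt ((k:ℝ)-1) * Real.sqrt ((k:ℝ)-1) = (k:ℝ)-1 :=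
      Real.mul_self_sqrt (by linarith)
    nlinarith [Real.sqrt_nonneg ((k:ℝ)-1), sq_nonneg (Real.sqrt ((k:ℝ)-1) - 1)]
  have hquad := quad_bound G k hconn hreg lam hlam hram
  rw [hh]
  apply le_csInf
  · obtain ⟨v⟩ : Nonempty V := hconn.nonempty
    exact ⟨_, ⟨{v}, singleton_nonempty v, by simpa using hcard, rfl⟩⟩
  · rintro r ⟨Y, hYne, hYcard, rfl⟩
    set n : ℝ := (Fintype.card V : ℝ) with hn
    set a : ℝ := (Y.card : ℝ) with ha
    set e : ℝ := ((Finset.univ.filter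
          (fun p : V × V => p.1 ∈ Y ∧ p.2 ∉ Y ∧ G.Adj p.1 p.2)).card : ℝ) with he
    have ha1 : 1 ≤ a := by
      rw [ha]; exact_mod_cast Finset.card_pos.2 hYne
    have hn2a : 2 * a ≤ n := by
      rw [ha, hn]; exact_mod_cast hYcard
    have hn0 : 0 < n := by linarith
    have he0 : 0 ≤ e := by positivity
    set χ : V → ℝ := fun u => if u ∈ Y then 1 else 0 with hχ
    have hχsum : ∑ u, χ u = a := by
      simp [hχ, Finset.sum_ite_mem, ha]
    set x : EuclideanSpace ℝ V := WithLp.toLp 2 (fun u => n * χ u - a) with hx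
    have hxsum : ∑ u, x u = 0 := by
      simp only [hx, WithLp.ofLp_toLp]
      rw [Finset.sum_sub_distrib, ← Finset.mul_sum, hχsum, Finset.sum_const, card_univ,
        nsmul_eq_mul]
      ring
    have hrow : ∀ u, ∑ w, (G.adjMatrix ℝ) u w = (k : ℝ) := by
      intro u
      rw [show ∑ w, (G.adjMatrix ℝ) u w = (G.adjMatrix ℝ *ᵥ (fun _ => 1)) u from by
        simp [Matrix.mulVec, dotProduct]]
      rw [SimpleGraph.adjMatrix_mulVec_apply]
      simp [hreg u]
    have hcol : ∀ w, ∑ u, (G.adjMatrix ℝ) u w = (k : ℝ) := by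
      intro w
      rw [show ∑ u, (G.adjMatrix ℝ) u w = ∑ u, (G.adjMatrix ℝ) w u from
        Finset.sum_congr rfl fun u _ => by simp [SimpleGraph.adjMatrix_apply, G.adj_comm]]
      exact hrow w
    set Nrow : V → ℝ := fun u => ∑ w, (G.adjMatrix ℝ) u w * χ w with hNrow
    set E11 : ℝ := ∑ u, χ u * Nrow u with hE11
    have hecard : e = ∑ u, ∑ w, χ u * (1 - χ w) * (G.adjMatrix ℝ) u w := by
      rw [he, Finset.card_filter]
      push_cast
      rw [Fintype.sum_prod_type]
      refine Finset.sum_congr rfl fun u _ => Finset.sum_congr rfl fun w _ => ?_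
      by_cases h1 : u ∈ Y <;> by_cases h2 : w ∈ Y <;> by_cases h3 : G.Adj u w <;>
        simp [hχ, h1, h2, h3]
    have hE11e : E11 + e = (k : ℝ) * a := by
      rw [hE11, hecard, ← Finset.sum_add_distrib]
      have key : ∀ u, χ u * Nrow u + ∑ w, χ u * (1 - χ w) * (G.adjMatrix ℝ) u w
          = χ u * (k : ℝ) := by
        intro u
        rw [hNrow, Finset.mul_sum, ← Finset.sum_add_distrib]
        rw [show χ u * (k:ℝ) = χ u * ∑ w, (G.adjMatrix ℝ) u w from by rw [hrow u],
          Finset.mul_sum]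
        exact Finset.sum_congr rfl fun w _ => by ring
      rw [Finset.sum_congr rfl fun u _ => key u, ← Finset.sum_mul, hχsum, mul_comm]
    have hNrowsum : ∑ u, Nrow u = (k : ℝ) * a := by
      rw [hNrow, Finset.sum_comm]
      have key : ∀ w, ∑ u, (G.adjMatrix ℝ) u w * χ w = (k : ℝ) * χ w := by
        intro w
        rw [← Finset.sum_mul, hcol w]
      rw [Finset.sum_congr rfl fun w _ => key w, ← Finset.mul_sum, hχsum]
    have hinner : ∀ u, ∑ w, (G.adjMatrix ℝ) u w * x w = n * Nrow u - a * (k : ℝ) := by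
      intro u
      have key : ∀ w, (G.adjMatrix ℝ) u w * x w
          = n * ((G.adjMatrix ℝ) u w * χ w) - a * (G.adjMatrix ℝ) u w := by
        intro w; simp only [hx, WithLp.ofLp_toLp]; ring
      rw [Finset.sum_congr rfl fun w _ => key w, Finset.sum_sub_distrib, ← Finset.mul_sum,
        ← Finset.mul_sum, hrow u, hNrow]
    have hQ : ∑ u, x u * ∑ w, (G.adjMatrix ℝ) u w * x w
        = n ^ 2 * E11 - (k : ℝ) * a ^ 2 * n := by
      have step : ∀ u, x u * (n * Nrow u - a * (k:ℝ))
          = n ^ 2 * (χ u * Nrow u) - a * n * Nrow u - a * (k:ℝ) * n * χ u + a * a * (k:ℝ) := by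
        intro u; simp only [hx, WithLp.ofLp_toLp]; ring
      calc ∑ u, x u * ∑ w, (G.adjMatrix ℝ) u w * x w
          = ∑ u, (n ^ 2 * (χ u * Nrow u) - a * n * Nrow u - a * (k:ℝ) * n * χ u
              + a * a * (k:ℝ)) := by
            refine Finset.sum_congr rfl fun u _ => ?_
            rw [hinner u, step u]
        _ = n ^ 2 * E11 - (k : ℝ) * a ^ 2 * n := by
            rw [Finset.sum_add_distrib, Finset.sum_sub_distrib, Finset.sum_sub_distrib,
              ← Finset.mul_sum, ← Finset.mul_sum, ← Finset.mul_sum, hχsum, hNrowsum,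
              Finset.sum_const, card_univ, nsmul_eq_mul, ← hE11, ← hn]
            ring
    have hXsq : ∑ u, x u ^ 2 = a * n * (n - a) := by
      have step : ∀ u, x u ^ 2 = (n^2 - 2*n*a) * χ u + a ^ 2 := by
        intro u
        simp only [hx, hχ, WithLp.ofLp_toLp]
        by_cases h1 : u ∈ Y <;> simp [h1] <;> ring
      rw [Finset.sum_congr rfl fun u _ => step u, Finset.sum_add_distrib, ← Finset.mul_sum,
        hχsum, Finset.sum_const, card_univ, nsmul_eq_mul, ← hn]
      ring
    have hmain := hquad x hxsum
    rw [hQ, hXsq] at hmain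
    have hE11val : E11 = (k : ℝ) * a - e := by linarith
    rw [hE11val] at hmain
    rw [div_le_div_iff₀ (by norm_num : (0:ℝ) < 2) (by linarith : (0:ℝ) < a)]
    nlinarith [mul_le_mul_of_nonneg_left hn2a
      (mul_nonneg (mul_nonneg (by linarith : (0:ℝ) ≤ (k:ℝ) - lam) (by linarith : (0:ℝ) ≤ a)) hn0.le),
      sq_nonneg n, mul_pos hn0 hn0]
end
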